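/- arXiv:2601.19828 — 6 statements merged into one kernel-verified Lean document; each statement's English description precedes it below -/
import Mathlib

section
/- Let q ∈ ℕ, let Z be a real Banach space, and let a < b be real numbers with τ = b − a. Then every Z-valued polynomial w of degree at most q satisfies ‖w‖_{L^∞((a,b);Z)}² ≤ (q+1)³ · τ⁻¹ · ‖w‖_{L²((a,b);Z)}². -/
open MeasureTheory Set

open Polynomial

/-- Legendre polynomials via the three-term recurrence. -/
noncomputable def Pl : ℕ → Polynomial ℝ
  | 0 => 1
  | 1 => X
  | (n+2) => C (((n:ℝ)+2)⁻¹) * (C (2*(n:ℝ)+3) * X * Pl (n+1) - C ((n:ℝ)+1) * Pl n)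

lemma plRec (n : ℕ) :
    C ((n:ℝ)+2) * Pl (n+2) = C (2*(n:ℝ)+3) * X * Pl (n+1) - C ((n:ℝ)+1) * Pl n := by
  have h : ((n:ℝ)+2) ≠ 0 := by positivity
  rw [Pl, ← mul_assoc, ← C_mul, mul_inv_cancel₀ h, C_1, one_mul]

lemma pl_natDegree : ∀ n, (Pl n).natDegree ≤ n := by
  intro n
  induction n using Nat.twoStepInduction with
  | zero => simp [Pl]
  | one => simp [Pl, natDegree_X_le]
  | more n ih1 ih2 =>
    rw [Pl]
    refine (natDegree_C_mul_le _ _).trans ((natDegree_sub_le _ _).trans ?_)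
    simp only [max_le_iff]
    constructor
    · rw [mul_assoc]
      refine (natDegree_C_mul_le _ _).trans ?_
      refine (natDegree_mul_le).trans ?_
      have := natDegree_X_le (R := ℝ)
      omega
    · refine (natDegree_C_mul_le _ _).trans ?_
      omega

/-- Leading coefficient of `Pl n`. -/
noncomputable def cl (n : ℕ) : ℝ := (Pl n).coeff n

lemma cl0 : cl 0 = 1 := by simp [cl, Pl]
lemma cl1 : cl 1 = 1 := by simp [cl, Pl]

lemma clRec (n : ℕ) : cl (n+2) = (2*(n:ℝ)+3)/((n:ℝ)+2) * cl (n+1) := by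
  have h := congrArg (fun p => p.coeff (n+2)) (plRec n)
  simp only [coeff_C_mul, coeff_sub, mul_assoc] at h
  rw [coeff_X_mul] at h
  have hz : (Pl n).coeff (n+2) = 0 :=
    coeff_eq_zero_of_natDegree_lt (lt_of_le_of_lt (pl_natDegree n) (by omega))
  rw [hz, mul_zero, sub_zero] at h
  have h2 : ((n:ℝ)+2) ≠ 0 := by positivity
  field_simp [cl]
  simp only [cl]
  linarith [h]

lemma clPos : ∀ n, 0 < cl n := by
  intro n
  induction n using Nat.twoStepInduction with
  | zero => rw [cl0]; norm_num
  | one => rw [cl1]; norm_num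
  | more n ih1 ih2 =>
    rw [clRec]
    have : (0:ℝ) < (2*(n:ℝ)+3)/((n:ℝ)+2) := by positivity
    exact mul_pos this ih2

lemma cl_ratio (n : ℕ) : cl (n+1) = (2*(n:ℝ)+1)/((n:ℝ)+1) * cl n := by
  cases n with
  | zero => rw [cl0, cl1]; norm_num
  | succ m =>
    rw [clRec m]
    push_cast
    ring_nf

lemma pl_eval_one : ∀ n, (Pl n).eval 1 = 1 := by
  intro n
  induction n using Nat.twoStepInduction with
  | zero => simp [Pl]
  | one => rw [Pl, eval_X]
  | more n ih1 ih2 =>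
    have h := congrArg (fun p => p.eval 1) (plRec n)
    simp only [eval_mul, eval_C, eval_X, eval_sub, ih1, ih2, mul_one, one_mul] at h
    have h2 : ((n:ℝ)+2) ≠ 0 := by positivity
    have h3 : ((n:ℝ)+2) * (Pl (n+2)).eval 1 = ((n:ℝ)+2) * 1 := by linarith
    exact mul_left_cancel₀ h2 h3

lemma pl_parity (n : ℕ) : (Pl n).comp (-X) = C ((-1:ℝ)^n) * Pl n := by
  induction n using Nat.twoStepInduction with
  | zero => simp [Pl]
  | one =>
    rw [Pl, X_comp]
    rw [show ((-1:ℝ))^1 = -1 by ring]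
    simp [map_neg]
  | more n ih1 ih2 =>
    have h := congrArg (fun p => p.comp (-X)) (plRec n)
    simp only [mul_comp, sub_comp, C_comp, X_comp, ih1, ih2] at h
    have h2 : C ((n:ℝ)+2) ≠ 0 := by
      simp only [ne_eq, C_eq_zero]; positivity
    apply mul_left_cancel₀ h2
    rw [h]
    conv_rhs => rw [mul_left_comm, plRec n]
    have e1 : ((-1:ℝ))^(n+2) = (-1)^n := by ring
    have e2 : ((-1:ℝ))^(n+1) = -(-1)^n := by ring
    rw [e1, e2]
    simp only [map_neg, map_mul]
    ring

lemma pl_eval_neg (n : ℕ) (x : ℝ) : (Pl n).eval (-x) = (-1)^n * (Pl n).eval x := by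
  have h := congrArg (fun p => p.eval x) (pl_parity n)
  simpa [eval_comp] using h

lemma pl_eval_negone (n : ℕ) : (Pl n).eval (-1) = (-1)^n := by
  have := pl_eval_neg n 1
  rw [pl_eval_one] at this
  simpa using this

lemma pl_TU : ∀ n : ℕ,
    derivative (Pl (n+1)) = X * derivative (Pl n) + C ((n:ℝ)+1) * Pl n ∧
    X * derivative (Pl (n+1)) = derivative (Pl n) + C ((n:ℝ)+1) * Pl (n+1) := by
  intro n
  induction n with
  | zero =>
    constructor
    · norm_num [Pl]
    · norm_num [Pl]
  | succ n ih =>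
    obtain ⟨T, U⟩ := ih
    have hC : C ((n:ℝ)+2) ≠ 0 := by simp only [ne_eq, C_eq_zero]; positivity
    have dRec := congrArg derivative (plRec n)
    simp only [derivative_mul, derivative_C, derivative_X, derivative_sub, zero_mul,
      mul_one, one_mul, zero_add] at dRec
    have pRec := plRec n
    push_cast
    simp only [map_add, map_mul, map_ofNat, map_one] at dRec pRec T U ⊢
    constructor
    · apply mul_left_cancel₀ (by simpa only [map_add, map_mul, map_ofNat, map_one] using hC)
      linear_combination dRec + (C (n:ℝ) + 1) * U
    · apply mul_left_cancel₀ (by simpa only [map_add, map_mul, map_ofNat, map_one] using hC)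
      linear_combination X * dRec + (2*(C (n:ℝ))+3) * X * U - ((C (n:ℝ))+2) * T - ((C (n:ℝ))+2) * pRec

lemma pl_W (n : ℕ) :
    derivative (Pl (n+2)) = derivative (Pl n) + C (2*(n:ℝ)+3) * Pl (n+1) := by
  have T := (pl_TU (n+1)).1
  have U := (pl_TU n).2
  push_cast at T
  simp only [map_add, map_mul, map_ofNat, map_one] at T U ⊢
  linear_combination T + U

lemma pl_ode (n : ℕ) :
    (X^2 - 1) * derivative (derivative (Pl n)) + C 2 * X * derivative (Pl n)
      = C ((n:ℝ)*((n:ℝ)+1)) * Pl n := by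
  obtain ⟨T, U⟩ := pl_TU n
  have V : (X^2 - 1) * derivative (Pl n) = C ((n:ℝ)+1) * (Pl (n+1) - X * Pl n) := by
    linear_combination U - X * T
  have dV := congrArg derivative V
  simp only [derivative_mul, derivative_sub, derivative_pow, derivative_X, derivative_one,
    derivative_C, mul_one, one_mul, zero_mul, sub_zero, zero_add, Nat.cast_ofNat,
    pow_one, zero_sub, neg_mul] at dV
  simp only [map_add, map_mul, map_ofNat, map_one] at dV T ⊢
  linear_combination dV + (C (n:ℝ) + 1) * T

lemma pl_span : ∀ (N : ℕ) (f : Polynomial ℝ), f.natDegree ≤ N →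
    ∃ β : ℕ → ℝ, f = ∑ j ∈ Finset.range (N+1), C (β j) * Pl j := by
  intro N
  induction N with
  | zero =>
    intro f hf
    refine ⟨fun _ => f.coeff 0, ?_⟩
    rw [Polynomial.eq_C_of_natDegree_le_zero hf]
    simp [Pl]
  | succ N ih =>
    intro f hf
    set α := f.coeff (N+1) / cl (N+1) with hα
    set g := f - C α * Pl (N+1) with hg
    have hgd : g.natDegree ≤ N := by
      rw [natDegree_le_iff_coeff_eq_zero]
      intro M hM
      rw [hg, coeff_sub, coeff_C_mul]
      rcases Nat.lt_or_ge (N+1) M with h | h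
      · rw [coeff_eq_zero_of_natDegree_lt (lt_of_le_of_lt hf h),
          coeff_eq_zero_of_natDegree_lt (lt_of_le_of_lt (pl_natDegree (N+1)) h)]
        ring
      · have hM1 : M = N + 1 := by omega
        subst hM1
        rw [hα]
        rw [show (Pl (N+1)).coeff (N+1) = cl (N+1) from rfl,
          div_mul_cancel₀ _ (ne_of_gt (clPos (N+1)))]
        ring
    obtain ⟨β, hβ⟩ := ih g hgd
    refine ⟨Function.update β (N+1) α, ?_⟩
    rw [Finset.sum_range_succ, Function.update_self]
    have : ∑ j ∈ Finset.range (N+1), C (Function.update β (N+1) α j) * Pl j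
        = ∑ j ∈ Finset.range (N+1), C (β j) * Pl j := by
      apply Finset.sum_congr rfl
      intro j hj
      rw [Function.update_of_ne (by simp at hj; omega)]
    rw [this, ← hβ, hg]
    ring

lemma pl_bound : ∀ (n : ℕ), ∀ x ∈ Set.Icc (-1:ℝ) 1, |(Pl n).eval x| ≤ 1 := by
  have key : ∀ (n : ℕ), ∀ x ∈ Set.Icc (0:ℝ) 1, |(Pl n).eval x| ≤ 1 := by
    intro n x hx
    rcases Nat.eq_zero_or_pos n with hn | hn
    · subst hn; simp [Pl]
    have hnn : (0:ℝ) < (n:ℝ) * ((n:ℝ)+1) := by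
      have : (1:ℝ) ≤ (n:ℝ) := by exact_mod_cast hn
      nlinarith
    set G : Polynomial ℝ :=
      C ((n:ℝ)*((n:ℝ)+1)) * Pl n ^ 2 + (1 - X^2) * (derivative (Pl n))^2 with hGdef
    have hG' : derivative G = C 2 * X * (derivative (Pl n))^2 := by
      have ode := pl_ode n
      rw [hGdef]
      simp only [derivative_add, derivative_mul, derivative_C, derivative_pow,
        derivative_sub, derivative_one, derivative_X, Nat.cast_ofNat, pow_one,
        mul_one, one_mul, zero_mul, zero_add, zero_sub, neg_mul]
      simp only [map_mul, map_add, map_ofNat, map_one] at ode ⊢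
      linear_combination (-2 * derivative (Pl n)) * ode
    have hmono : MonotoneOn (fun y => G.eval y) (Set.Icc (0:ℝ) 1) := by
      apply monotoneOn_of_deriv_nonneg (convex_Icc 0 1)
      · exact (G.continuous_aeval.continuousOn)
      · exact fun y _ => (G.differentiable y).differentiableWithinAt
      · intro y hy
        rw [interior_Icc] at hy
        rw [Polynomial.deriv, hG']
        simp only [eval_mul, eval_C, eval_X, eval_pow]
        have : (0:ℝ) ≤ y := le_of_lt hy.1
        positivity
    have hle : G.eval x ≤ G.eval 1 := by
      apply hmono hx (by norm_num) hx.2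
    have hG1 : G.eval 1 = (n:ℝ)*((n:ℝ)+1) := by
      simp [hGdef, pl_eval_one]
    have hGx : ((n:ℝ)*((n:ℝ)+1)) * ((Pl n).eval x)^2 ≤ G.eval x := by
      rw [hGdef]
      simp only [eval_add, eval_mul, eval_C, eval_pow, eval_sub, eval_one, eval_X]
      have h1 : (0:ℝ) ≤ 1 - x^2 := by nlinarith [hx.1, hx.2]
      nlinarith [sq_nonneg ((derivative (Pl n)).eval x)]
    have hsq : ((Pl n).eval x)^2 ≤ 1 := by
      rw [hG1] at hle
      nlinarith
    calc |(Pl n).eval x| = |(Pl n).eval x| * 1 := (mul_one _).symm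
      _ ≤ 1 := by nlinarith [abs_nonneg ((Pl n).eval x), sq_abs ((Pl n).eval x)]
  intro n x hx
  rcases le_or_gt 0 x with h | h
  · exact key n x ⟨h, hx.2⟩
  · have hx' : -x ∈ Set.Icc (0:ℝ) 1 := ⟨by linarith, by linarith [hx.1]⟩
    have := key n (-x) hx'
    rw [pl_eval_neg] at this
    rw [abs_mul, abs_pow, abs_neg, abs_one, one_pow, one_mul] at this
    exact this

open intervalIntegral in
/-- Inner product of two polynomials over `[-1,1]`. -/
noncomputable def JJ (f g : Polynomial ℝ) : ℝ := ∫ x in (-1:ℝ)..1, f.eval x * g.eval x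

lemma polyCont (f : Polynomial ℝ) : Continuous fun x : ℝ => f.eval x :=
  f.continuous_aeval

lemma polyII (f g : Polynomial ℝ) (a b : ℝ) :
    IntervalIntegrable (fun x => f.eval x * g.eval x) MeasureTheory.volume a b :=
  ((polyCont f).mul (polyCont g)).intervalIntegrable a b

lemma JJ_symm (f g : Polynomial ℝ) : JJ f g = JJ g f := by
  unfold JJ
  congr 1
  ext x
  ring

lemma JJ_C_mul_right (a : ℝ) (f g : Polynomial ℝ) : JJ f (C a * g) = a * JJ f g := by
  unfold JJ
  rw [← intervalIntegral.integral_const_mul]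
  congr 1
  ext x
  simp [eval_mul]
  ring

lemma JJ_C_mul_left (a : ℝ) (f g : Polynomial ℝ) : JJ (C a * f) g = a * JJ f g := by
  rw [JJ_symm, JJ_C_mul_right, JJ_symm]

lemma JJ_add_right (f g h : Polynomial ℝ) : JJ f (g + h) = JJ f g + JJ f h := by
  unfold JJ
  rw [← intervalIntegral.integral_add (polyII f g _ _) (polyII f h _ _)]
  congr 1
  ext x
  simp [eval_add]
  ring

lemma JJ_sub_right (f g h : Polynomial ℝ) : JJ f (g - h) = JJ f g - JJ f h := by
  unfold JJ
  rw [← intervalIntegral.integral_sub (polyII f g _ _) (polyII f h _ _)]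
  congr 1
  ext x
  simp [eval_sub]
  ring

lemma JJ_sum_right (f : Polynomial ℝ) (s : Finset ℕ) (g : ℕ → Polynomial ℝ) :
    JJ f (∑ j ∈ s, g j) = ∑ j ∈ s, JJ f (g j) := by
  classical
  induction s using Finset.induction with
  | empty => simp [JJ]
  | insert j t hj ih =>
    rw [Finset.sum_insert hj, Finset.sum_insert hj, JJ_add_right, ih]

lemma JJ_sub_left (f g h : Polynomial ℝ) : JJ (f - g) h = JJ f h - JJ g h := by
  rw [JJ_symm, JJ_sub_right, JJ_symm f h, JJ_symm g h]

lemma JJ_X_assoc (f g : Polynomial ℝ) : JJ (X * f) g = JJ f (X * g) := by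
  unfold JJ
  congr 1
  ext x
  simp [eval_mul]
  ring

lemma JJ_rec (k : ℕ) (f : Polynomial ℝ) :
    ((k:ℝ)+2) * JJ (Pl (k+2)) f
      = (2*(k:ℝ)+3) * JJ (Pl (k+1)) (X * f) - ((k:ℝ)+1) * JJ (Pl k) f := by
  have h : ((k:ℝ)+2) * JJ (Pl (k+2)) f = JJ (C ((k:ℝ)+2) * Pl (k+2)) f := by
    rw [JJ_C_mul_left]
  rw [h, plRec k]
  rw [show C (2*(k:ℝ)+3) * X * Pl (k+1) = C (2*(k:ℝ)+3) * (X * Pl (k+1)) by ring]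
  rw [JJ_sub_left, JJ_C_mul_left, JJ_C_mul_left, JJ_X_assoc]

lemma JJ_pl_odd (n m : ℕ) (h : (n + m) % 2 = 1) : JJ (Pl n) (Pl m) = 0 := by
  have hneg := intervalIntegral.integral_comp_neg
    (a := (-1:ℝ)) (b := 1) (fun x => (Pl n).eval x * (Pl m).eval x)
  norm_num at hneg
  have hodd : ∀ x : ℝ, (Pl n).eval (-x) * (Pl m).eval (-x)
      = -((Pl n).eval x * (Pl m).eval x) := by
    intro x
    rw [pl_eval_neg, pl_eval_neg]
    have : ((-1:ℝ))^n * ((-1:ℝ))^m = -1 := by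
      rw [← pow_add]
      exact Odd.neg_one_pow (Nat.odd_iff.mpr h)
    linear_combination (eval x (Pl n) * eval x (Pl m)) * this
  simp only [hodd] at hneg
  rw [intervalIntegral.integral_neg] at hneg
  have : JJ (Pl n) (Pl m) = ∫ x in (-1:ℝ)..1, (Pl n).eval x * (Pl m).eval x := rfl
  rw [this]
  linarith [hneg]

lemma JJ_parts (f g : Polynomial ℝ) :
    JJ (derivative f) g + JJ f (derivative g)
      = f.eval 1 * g.eval 1 - f.eval (-1) * g.eval (-1) := by
  have hd : ∀ x ∈ Set.uIcc (-1:ℝ) 1,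
      HasDerivAt (fun y => f.eval y * g.eval y)
        ((derivative f).eval x * g.eval x + f.eval x * (derivative g).eval x) x :=
    fun x _ => (f.hasDerivAt x).mul (g.hasDerivAt x)
  have hi : IntervalIntegrable
      (fun x => (derivative f).eval x * g.eval x + f.eval x * (derivative g).eval x)
      MeasureTheory.volume (-1) 1 :=
    (polyII (derivative f) g _ _).add (polyII f (derivative g) _ _)
  have := intervalIntegral.integral_eq_sub_of_hasDerivAt hd hi
  unfold JJ
  rw [← intervalIntegral.integral_add (polyII (derivative f) g _ _) (polyII f (derivative g) _ _)]
  rw [this]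

lemma xpl_decomp_deg (k : ℕ) :
    (X * Pl k - C (cl k / cl (k+1)) * Pl (k+1)).natDegree ≤ k := by
  rw [natDegree_le_iff_coeff_eq_zero]
  intro M hM
  obtain ⟨m, rfl⟩ : ∃ m, M = m + 1 := ⟨M - 1, by omega⟩
  rw [coeff_sub, coeff_X_mul, coeff_C_mul]
  rcases Nat.lt_or_ge (k+1) (m+1) with h | h
  · rw [coeff_eq_zero_of_natDegree_lt (lt_of_le_of_lt (pl_natDegree k) (by omega)),
      coeff_eq_zero_of_natDegree_lt (lt_of_le_of_lt (pl_natDegree (k+1)) (by omega))]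
    ring
  · have hmk : m = k := by omega
    rw [hmk]
    rw [show (Pl k).coeff k = cl k from rfl, show (Pl (k+1)).coeff (k+1) = cl (k+1) from rfl,
      div_mul_cancel₀ _ (ne_of_gt (clPos (k+1)))]
    ring

theorem pl_orth : ∀ n : ℕ,
    (∀ f : Polynomial ℝ, f.natDegree < n → JJ (Pl n) f = 0) ∧
    (∀ m : ℕ, m + 1 = n → JJ (Pl m) (Pl m) = 2/(2*(m:ℝ)+1)) := by
  intro n
  induction n using Nat.strong_induction_on with
  | _ n ih =>
  match n, ih with
  | 0, _ =>
    exact ⟨fun f hf => absurd hf (Nat.not_lt_zero _), fun m hm => absurd hm (by omega)⟩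
  | 1, _ =>
    constructor
    · intro f hf
      rw [Polynomial.eq_C_of_natDegree_le_zero (by omega : f.natDegree ≤ 0)]
      unfold JJ
      rw [show Pl 1 = X from by rw [Pl]]
      simp only [eval_X, eval_C]
      rw [intervalIntegral.integral_mul_const, integral_id]
      norm_num
    · intro m hm
      have : m = 0 := by omega
      subst this
      unfold JJ
      rw [show Pl 0 = (1:Polynomial ℝ) from rfl]
      simp only [eval_one, one_mul]
      rw [intervalIntegral.integral_const]
      norm_num
  | (k+2), ih =>
    have A1 := (ih (k+1) (by omega)).1
    have A0 := (ih k (by omega)).1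
    have Nk : JJ (Pl k) (Pl k) = 2/(2*(k:ℝ)+1) := (ih (k+1) (by omega)).2 k rfl
    -- s1 : low-degree Legendre orthogonality
    have s1 : ∀ j, j + 3 ≤ k + 2 → JJ (Pl (k+2)) (Pl j) = 0 := by
      intro j hj
      have hrec := JJ_rec k (Pl j)
      have e1 : JJ (Pl (k+1)) (X * Pl j) = 0 := by
        apply A1
        calc (X * Pl j).natDegree ≤ X.natDegree + (Pl j).natDegree := natDegree_mul_le
          _ ≤ 1 + j := by
              have := pl_natDegree j
              have := natDegree_X_le (R := ℝ)
              omega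
          _ < k + 1 := by omega
      have e2 : JJ (Pl k) (Pl j) = 0 :=
        A0 _ (lt_of_le_of_lt (pl_natDegree j) (show j < k by omega))
      rw [e1, e2] at hrec
      have h2 : ((k:ℝ)+2) ≠ 0 := by positivity
      have h3 : ((k:ℝ)+2) * JJ (Pl (k+2)) (Pl j) = 0 := by rw [hrec]; ring
      exact (mul_eq_zero.mp h3).resolve_left h2
    -- s2 : extended to all low-degree polynomials
    have s2 : ∀ f : Polynomial ℝ, f.natDegree + 3 ≤ k + 2 → JJ (Pl (k+2)) f = 0 := by
      intro f hf
      obtain ⟨β, hβ⟩ := pl_span f.natDegree f le_rfl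
      rw [hβ, JJ_sum_right]
      apply Finset.sum_eq_zero
      intro j hj
      simp only [Finset.mem_range] at hj
      rw [JJ_C_mul_right, s1 j (by omega), mul_zero]
    set x1 := JJ (Pl (k+2)) (Pl k) with hx1def
    set x2 := JJ (Pl (k+1)) (Pl (k+1)) with hx2def
    -- the ratio of leading coefficients
    have hratio : cl k / cl (k+1) = ((k:ℝ)+1)/(2*(k:ℝ)+1) := by
      rw [cl_ratio k]
      have h1 := clPos k
      have h2 : (2*(k:ℝ)+1) ≠ 0 := by positivity
      have h3 : ((k:ℝ)+1) ≠ 0 := by positivity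
      field_simp
    -- E1
    have hXdec : JJ (Pl (k+1)) (X * Pl k) = ((k:ℝ)+1)/(2*(k:ℝ)+1) * x2 := by
      have hsplit : X * Pl k
          = (X * Pl k - C (cl k / cl (k+1)) * Pl (k+1)) + C (cl k / cl (k+1)) * Pl (k+1) := by
        ring
      have hdeg : (X * Pl k - C (cl k / cl (k+1)) * Pl (k+1)).natDegree < k + 1 :=
        Nat.lt_succ_of_le (xpl_decomp_deg k)
      rw [hsplit, JJ_add_right, A1 _ hdeg, JJ_C_mul_right, hratio]
      ring
    have E1 : (2*(k:ℝ)+1) * (((k:ℝ)+2) * x1)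
        = (2*(k:ℝ)+3) * (((k:ℝ)+1) * x2) - 2*((k:ℝ)+1) := by
      have hrec := JJ_rec k (Pl k)
      rw [hXdec, Nk] at hrec
      have h2 : (2*(k:ℝ)+1) ≠ 0 := by positivity
      field_simp at hrec
      linarith [hrec]
    -- E2 via integration by parts
    have hparts := JJ_parts (Pl (k+1)) (Pl (k+2))
    rw [pl_eval_one, pl_eval_one, pl_eval_negone, pl_eval_negone] at hparts
    have hsign : (1:ℝ) * 1 - (-1:ℝ)^(k+1) * (-1:ℝ)^(k+2) = 2 := by
      rw [← pow_add]
      rw [Odd.neg_one_pow (⟨k+1, by ring⟩ : Odd (k+1+(k+2)))]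
      ring
    rw [hsign] at hparts
    have hterm2 : JJ (Pl (k+1)) (derivative (Pl (k+2))) = (2*(k:ℝ)+3) * x2 := by
      rw [pl_W k, JJ_add_right, JJ_C_mul_right]
      rw [A1 _ (by
        have h := natDegree_derivative_le (Pl k)
        have := pl_natDegree k
        omega)]
      ring
    have hterm1 : JJ (derivative (Pl (k+1))) (Pl (k+2)) = (2*(k:ℝ)+1) * x1 := by
      rw [JJ_symm]
      cases k with
      | zero =>
        rw [show derivative (Pl 1) = C 1 by rw [Pl]; simp]
        rw [show (C (1:ℝ)) = Pl 0 by rw [Pl]; simp]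
        push_cast
        rw [hx1def]
        ring
      | succ k' =>
        rw [pl_W k', JJ_add_right, JJ_C_mul_right]
        rw [s2 _ (by
          have h := natDegree_derivative_le (Pl k')
          have := pl_natDegree k'
          omega)]
        push_cast
        rw [hx1def]
        ring
    have E2 : (2*(k:ℝ)+1) * x1 + (2*(k:ℝ)+3) * x2 = 2 := by
      rw [hterm1, hterm2] at hparts
      linarith
    -- solve the linear system
    have hx2 : x2 = 2/(2*(k:ℝ)+3) := by
      have h5 : (2*(k:ℝ)+3) * ((2*(k:ℝ)+3)*x2 - 2) = 0 := by
        linear_combination ((k:ℝ)+2)*E2 - E1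
      have h6 : (2*(k:ℝ)+3) ≠ 0 := by positivity
      rcases mul_eq_zero.mp h5 with h | h
      · exact absurd h h6
      · field_simp
        linarith
    have hx1 : x1 = 0 := by
      rw [hx2] at E2
      have h6 : (2*(k:ℝ)+3) ≠ 0 := by positivity
      rw [mul_div_cancel₀ _ h6] at E2
      have h7 : (2*(k:ℝ)+1) ≠ 0 := by positivity
      have := mul_eq_zero.mp (by linarith : (2*(k:ℝ)+1) * x1 = 0)
      tauto
    constructor
    · intro f hf
      obtain ⟨β, hβ⟩ := pl_span f.natDegree f le_rfl
      rw [hβ, JJ_sum_right]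
      apply Finset.sum_eq_zero
      intro j hj
      simp only [Finset.mem_range] at hj
      rw [JJ_C_mul_right]
      have hj2 : j ≤ k + 1 := by omega
      rcases Nat.lt_or_ge j k with h | h
      · rw [s1 j (by omega), mul_zero]
      · have : j = k ∨ j = k + 1 := by omega
        rcases this with h | h
        · subst h; rw [← hx1def, hx1, mul_zero]
        · subst h
          rw [JJ_pl_odd (k+2) (k+1) (by omega), mul_zero]
    · intro m hm
      have : m = k + 1 := by omega
      subst this
      rw [← hx2def, hx2]
      push_cast
      ring_nf

lemma pl_norm (n : ℕ) : JJ (Pl n) (Pl n) = 2/(2*(n:ℝ)+1) := (pl_orth (n+1)).2 n rfl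

lemma pl_orthogonal {m n : ℕ} (h : m ≠ n) : JJ (Pl n) (Pl m) = 0 := by
  rcases Nat.lt_or_ge m n with hlt | hge
  · exact (pl_orth n).1 _ (lt_of_le_of_lt (pl_natDegree m) hlt)
  · have : n < m := by omega
    rw [JJ_symm]
    exact (pl_orth m).1 _ (lt_of_le_of_lt (pl_natDegree n) this)

lemma cs_bound {a b : ℝ} (hab : a ≤ b) (h k : ℝ → ℝ)
    (hh : Continuous h) (hk : Continuous k)
    (hhnn : ∀ t, 0 ≤ h t) (hknn : ∀ t, 0 ≤ k t) :
    (∫ t in a..b, h t * k t) ≤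
      Real.sqrt (∫ t in a..b, (h t)^2) * Real.sqrt (∫ t in a..b, (k t)^2) := by
  set A := ∫ t in a..b, (h t)^2 with hA
  set B := ∫ t in a..b, h t * k t with hB
  set S := ∫ t in a..b, (k t)^2 with hS
  have ih2 : IntervalIntegrable (fun t => (h t)^2) MeasureTheory.volume a b :=
    (hh.pow 2).intervalIntegrable a b
  have ik2 : IntervalIntegrable (fun t => (k t)^2) MeasureTheory.volume a b :=
    (hk.pow 2).intervalIntegrable a b
  have ihk : IntervalIntegrable (fun t => h t * k t) MeasureTheory.volume a b :=
    (hh.mul hk).intervalIntegrable a b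
  have hquad : ∀ x : ℝ, 0 ≤ A * (x*x) + (-2*B) * x + S := by
    intro x
    rw [show A * (x*x) = A * x^2 by ring]
    have hexp : ∀ t : ℝ, (x * h t - k t)^2
        = x^2 * (h t)^2 + (-2*x) * (h t * k t) + (k t)^2 := by intro t; ring
    have hint : (∫ t in a..b, (x * h t - k t)^2) = x^2 * A + (-2*x) * B + S := by
      simp_rw [hexp]
      rw [intervalIntegral.integral_add (((ih2.const_mul _).add (ihk.const_mul _)))
        ik2, intervalIntegral.integral_add (ih2.const_mul _) (ihk.const_mul _),
        intervalIntegral.integral_const_mul, intervalIntegral.integral_const_mul]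
    have hnn : 0 ≤ ∫ t in a..b, (x * h t - k t)^2 :=
      intervalIntegral.integral_nonneg hab (fun t _ => sq_nonneg _)
    rw [hint] at hnn
    nlinarith [hnn]
  have hdisc := discrim_le_zero hquad
  rw [discrim] at hdisc
  have hBsq : B^2 ≤ A * S := by nlinarith [hdisc]
  have hB0 : 0 ≤ B :=
    intervalIntegral.integral_nonneg hab (fun t _ => mul_nonneg (hhnn t) (hknn t))
  calc B = Real.sqrt (B^2) := (Real.sqrt_sq hB0).symm
    _ ≤ Real.sqrt (A * S) := Real.sqrt_le_sqrt hBsq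
    _ = Real.sqrt A * Real.sqrt S := Real.sqrt_mul
        (intervalIntegral.integral_nonneg hab (fun t _ => sq_nonneg _)) _

lemma sum_odds (n : ℕ) : ∑ j ∈ Finset.range n, (2*(j:ℝ)+1) = (n:ℝ)^2 := by
  induction n with
  | zero => simp
  | succ n ih =>
    rw [Finset.sum_range_succ, ih]
    push_cast
    ring


open MeasureTheory Set

/-- A `Z`-valued polynomial of degree at most `q`:
`t ↦ ∑_{i=0}^{q} t^i • c i` with coefficients `c i ∈ Z`. -/
def IsPolyDegLE (Z : Type*) [AddCommGroup Z] [Module ℝ Z] (q : ℕ) (f : ℝ → Z) : Prop :=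
  ∃ c : Fin (q + 1) → Z, ∀ t : ℝ, f t = ∑ i : Fin (q + 1), t ^ (i : ℕ) • c i

/-- **Polynomial inverse estimate.** For every `Z`-valued polynomial `w` of degree at most `q`,
`‖w‖_{L^∞((a,b);Z)}² ≤ (q+1)³ τ⁻¹ ‖w‖_{L²((a,b);Z)}²` with `τ = b - a`. -/
theorem inverse_estimate (q : ℕ) (Z : Type*) [NormedAddCommGroup Z] [NormedSpace ℝ Z]
    [CompleteSpace Z] (a b τ : ℝ) (hab : a < b) (hτ : τ = b - a)
    (w : ℝ → Z) (hw : IsPolyDegLE Z q w) :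
    (eLpNorm w ⊤ (volume.restrict (Ioo a b))) ^ 2 ≤
      ENNReal.ofReal (((q : ℝ) + 1) ^ 3 * τ⁻¹) *
        (eLpNorm w 2 (volume.restrict (Ioo a b))) ^ 2 := by
  obtain ⟨c, hc⟩ := hw
  have hτ0 : 0 < τ := by rw [hτ]; linarith
  have hτne : τ ≠ 0 := ne_of_gt hτ0
  have hab' : a ≤ b := le_of_lt hab
  set σ : ℝ → ℝ := fun t => (2*t - (a+b))/τ with hσdef
  have hσcont : Continuous σ :=
    ((continuous_const.mul continuous_id).sub continuous_const).div_const τ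
  have hwc : Continuous w := by
    have hwe : w = fun t => ∑ i : Fin (q+1), t ^ (i:ℕ) • c i := funext hc
    rw [hwe]
    exact continuous_finset_sum _ (fun i _ => (continuous_pow _).smul continuous_const)
  -- expansion of the shifted monomials in the Legendre basis
  have hspan : ∀ i : Fin (q+1), ∃ β : ℕ → ℝ,
      (C (τ/2) * X + C ((a+b)/2))^(i:ℕ) = ∑ j ∈ Finset.range (q+1), C (β j) * Pl j := by
    intro i
    apply pl_span q
    calc ((C (τ/2) * X + C ((a+b)/2))^(i:ℕ)).natDegree
        ≤ (i:ℕ) * (C (τ/2) * X + C ((a+b)/2)).natDegree := natDegree_pow_le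
      _ ≤ (i:ℕ) * 1 := Nat.mul_le_mul_left _ natDegree_linear_le
      _ ≤ q := by have := i.isLt; omega
  choose β hβ using hspan
  set γ : ℕ → Z := fun j => ∑ i : Fin (q+1), (β i j) • c i with hγdef
  have hQeval : ∀ (i : Fin (q+1)) (t : ℝ),
      ((C (τ/2) * X + C ((a+b)/2))^(i:ℕ)).eval (σ t) = t ^ (i:ℕ) := by
    intro i t
    rw [eval_pow]
    congr 1
    simp only [eval_add, eval_mul, eval_C, eval_X, hσdef]
    field_simp
    ring
  have hrep : ∀ t, w t = ∑ j ∈ Finset.range (q+1), ((Pl j).eval (σ t)) • γ j := by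
    intro t
    rw [hc t]
    have step1 : ∀ i : Fin (q+1), t ^ (i:ℕ) • c i
        = ∑ j ∈ Finset.range (q+1), (β i j * (Pl j).eval (σ t)) • c i := by
      intro i
      rw [← hQeval i t, hβ i, eval_finset_sum, Finset.sum_smul]
      apply Finset.sum_congr rfl
      intro j _
      congr 1
      simp [eval_mul]
    calc ∑ i : Fin (q+1), t^(i:ℕ) • c i
        = ∑ i : Fin (q+1), ∑ j ∈ Finset.range (q+1), (β i j * (Pl j).eval (σ t)) • c i :=
          Finset.sum_congr rfl (fun i _ => step1 i)
      _ = ∑ j ∈ Finset.range (q+1), ∑ i : Fin (q+1), (β i j * (Pl j).eval (σ t)) • c i :=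
          Finset.sum_comm
      _ = ∑ j ∈ Finset.range (q+1), ((Pl j).eval (σ t)) • γ j := by
          apply Finset.sum_congr rfl
          intro j _
          rw [hγdef, Finset.smul_sum]
          apply Finset.sum_congr rfl
          intro i _
          rw [smul_smul, mul_comm]
  -- change of variables
  have hσa : σ a = -1 := by
    rw [hσdef]
    show (2*a - (a+b))/τ = -1
    rw [div_eq_iff hτne]
    rw [hτ]; ring
  have hσb : σ b = 1 := by
    rw [hσdef]
    show (2*b - (a+b))/τ = 1
    rw [div_eq_iff hτne]
    rw [hτ]; ring
  have hσlin : ∀ t : ℝ, (2/τ)*t + (-(a+b)/τ) = σ t := by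
    intro t
    rw [hσdef]
    show _ = (2*t - (a+b))/τ
    field_simp
    ring
  have htrans : ∀ g : Polynomial ℝ,
      (∫ t in a..b, g.eval (σ t)) = (τ/2) * ∫ s in (-1:ℝ)..1, g.eval s := by
    intro g
    have h2τ : (2/τ) ≠ 0 := by positivity
    have hcomp := intervalIntegral.integral_comp_mul_add
      (a := a) (b := b) (fun s => g.eval s) h2τ (-(a+b)/τ)
    simp only [hσlin] at hcomp
    rw [hσa, hσb] at hcomp
    rw [hcomp, smul_eq_mul]
    congr 1
    rw [← one_div, one_div_div]
  have hprod : ∀ j k : ℕ,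
      (∫ t in a..b, (Pl j).eval (σ t) * (Pl k).eval (σ t)) = (τ/2) * JJ (Pl j) (Pl k) := by
    intro j k
    have h := htrans (Pl j * Pl k)
    simp only [eval_mul] at h
    exact h
  -- the coefficient integrals
  have hψwcont : ∀ j : ℕ, Continuous fun t => (Pl j).eval (σ t) • w t :=
    fun j => ((polyCont (Pl j)).comp hσcont).smul hwc
  have hgam : ∀ j ∈ Finset.range (q+1),
      (∫ t in a..b, ((Pl j).eval (σ t)) • w t) = (τ/(2*(j:ℝ)+1)) • γ j := by
    intro j hj
    have hintg : (fun t => ((Pl j).eval (σ t)) • w t)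
        = fun t => ∑ k ∈ Finset.range (q+1),
            ((Pl j).eval (σ t) * (Pl k).eval (σ t)) • γ k := by
      funext t
      rw [hrep t, Finset.smul_sum]
      apply Finset.sum_congr rfl
      intro k _
      rw [smul_smul]
    rw [hintg]
    have hint : ∀ k ∈ Finset.range (q+1), IntervalIntegrable
        (fun t => ((Pl j).eval (σ t) * (Pl k).eval (σ t)) • γ k) volume a b := by
      intro k _
      exact ((((polyCont (Pl j)).comp hσcont).mul ((polyCont (Pl k)).comp hσcont)).smul
        continuous_const).intervalIntegrable a b
    rw [intervalIntegral.integral_finset_sum hint]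
    have hterm : ∀ k ∈ Finset.range (q+1),
        (∫ t in a..b, ((Pl j).eval (σ t) * (Pl k).eval (σ t)) • γ k)
          = ((τ/2) * JJ (Pl j) (Pl k)) • γ k := by
      intro k _
      rw [intervalIntegral.integral_smul_const, hprod j k]
    rw [Finset.sum_congr rfl hterm]
    rw [Finset.sum_eq_single j]
    · rw [pl_norm j]
      congr 1
      field_simp
    · intro k _ hkj
      rw [pl_orthogonal hkj, mul_zero, zero_smul]
    · intro hnot
      exact absurd hj hnot
  set S : ℝ := ∫ t in a..b, ‖w t‖^2 with hSdef
  have hS0 : 0 ≤ S := intervalIntegral.integral_nonneg hab' (fun t _ => sq_nonneg _)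
  have hγbd : ∀ j ∈ Finset.range (q+1),
      ‖γ j‖ ≤ Real.sqrt ((2*(j:ℝ)+1)/τ) * Real.sqrt S := by
    intro j hj
    have hpos : (0:ℝ) < 2*(j:ℝ)+1 := by positivity
    have hγj : γ j = ((2*(j:ℝ)+1)/τ) • ∫ t in a..b, ((Pl j).eval (σ t)) • w t := by
      rw [hgam j hj, smul_smul,
        show (2*(j:ℝ)+1)/τ * (τ/(2*(j:ℝ)+1)) = 1 by field_simp, one_smul]
    have hn1 : ‖γ j‖ = ((2*(j:ℝ)+1)/τ) * ‖∫ t in a..b, ((Pl j).eval (σ t)) • w t‖ := by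
      rw [hγj, norm_smul, Real.norm_eq_abs, abs_of_pos (by positivity)]
    have hn2 : ‖∫ t in a..b, ((Pl j).eval (σ t)) • w t‖
        ≤ ∫ t in a..b, |(Pl j).eval (σ t)| * ‖w t‖ := by
      have h := intervalIntegral.norm_integral_le_integral_norm
        (f := fun t => ((Pl j).eval (σ t)) • w t) (μ := volume) hab'
      simpa [norm_smul, Real.norm_eq_abs] using h
    have hcs := cs_bound hab' (fun t => |(Pl j).eval (σ t)|) (fun t => ‖w t‖)
      (((polyCont (Pl j)).comp hσcont).abs) hwc.norm
      (fun t => abs_nonneg _) (fun t => norm_nonneg _)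
    have hsq : (∫ t in a..b, |(Pl j).eval (σ t)|^2) = τ/(2*(j:ℝ)+1) := by
      have habs : ∀ t:ℝ, |(Pl j).eval (σ t)|^2 = (Pl j).eval (σ t) * (Pl j).eval (σ t) := by
        intro t; rw [sq_abs]; ring
      simp_rw [habs]
      rw [hprod j j, pl_norm j]
      field_simp
    rw [hsq] at hcs
    have key : ((2*(j:ℝ)+1)/τ) * Real.sqrt (τ/(2*(j:ℝ)+1)) = Real.sqrt ((2*(j:ℝ)+1)/τ) := by
      have h1 : (0:ℝ) ≤ τ/(2*(j:ℝ)+1) := by positivity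
      have e1 : Real.sqrt ((τ/(2*(j:ℝ)+1)) * ((2*(j:ℝ)+1)/τ)^2)
          = Real.sqrt (τ/(2*(j:ℝ)+1)) * ((2*(j:ℝ)+1)/τ) := by
        rw [Real.sqrt_mul h1, Real.sqrt_sq (by positivity)]
      have e2 : (τ/(2*(j:ℝ)+1)) * ((2*(j:ℝ)+1)/τ)^2 = (2*(j:ℝ)+1)/τ := by
        field_simp
      rw [mul_comm, ← e1, e2]
    calc ‖γ j‖ ≤ ((2*(j:ℝ)+1)/τ) * (Real.sqrt (τ/(2*(j:ℝ)+1)) * Real.sqrt S) := by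
          rw [hn1]
          exact mul_le_mul_of_nonneg_left (le_trans hn2 hcs) (by positivity)
      _ = Real.sqrt ((2*(j:ℝ)+1)/τ) * Real.sqrt S := by rw [← mul_assoc, key]
  -- pointwise bound
  have hσmem : ∀ t ∈ Set.Icc a b, σ t ∈ Set.Icc (-1:ℝ) 1 := by
    intro t ht
    rw [hσdef]
    rw [Set.mem_Icc]
    constructor
    · rw [le_div_iff₀ hτ0]
      rw [hτ]; linarith [ht.1]
    · rw [div_le_iff₀ hτ0]
      rw [hτ]; linarith [ht.2]
  set M : ℝ := Real.sqrt ((((q:ℝ)+1)^3)/τ) * Real.sqrt S with hMdef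
  have hM0 : 0 ≤ M := mul_nonneg (Real.sqrt_nonneg _) (Real.sqrt_nonneg _)
  have hsumbd : ∑ j ∈ Finset.range (q+1), Real.sqrt ((2*(j:ℝ)+1)/τ)
      ≤ Real.sqrt ((((q:ℝ)+1)^3)/τ) := by
    have h1 := Finset.sum_mul_sq_le_sq_mul_sq (Finset.range (q+1))
      (fun _ => (1:ℝ)) (fun j => Real.sqrt ((2*(j:ℝ)+1)/τ))
    simp only [one_mul, one_pow] at h1
    have h2 : ∀ j ∈ Finset.range (q+1),
        (Real.sqrt ((2*(j:ℝ)+1)/τ))^2 = (2*(j:ℝ)+1)/τ := by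
      intro j _
      exact Real.sq_sqrt (by positivity)
    rw [Finset.sum_congr rfl h2, Finset.sum_const, Finset.card_range] at h1
    have h3 : ∑ j ∈ Finset.range (q+1), (2*(j:ℝ)+1)/τ = (((q:ℝ)+1)^2)/τ := by
      rw [← Finset.sum_div, sum_odds]
      push_cast
      ring
    rw [h3] at h1
    simp only [nsmul_eq_mul, mul_one] at h1
    have h4 : ((q+1 : ℕ) : ℝ) * ((((q:ℝ)+1)^2)/τ) = (((q:ℝ)+1)^3)/τ := by
      push_cast; ring
    rw [h4] at h1
    refine (Real.le_sqrt (Finset.sum_nonneg fun j _ => Real.sqrt_nonneg _) ?_).mpr h1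
    positivity
  have hpt : ∀ t ∈ Set.Ioo a b, ‖w t‖ ≤ M := by
    intro t ht
    have htIcc : t ∈ Set.Icc a b := ⟨le_of_lt ht.1, le_of_lt ht.2⟩
    calc ‖w t‖ = ‖∑ j ∈ Finset.range (q+1), ((Pl j).eval (σ t)) • γ j‖ := by rw [hrep t]
      _ ≤ ∑ j ∈ Finset.range (q+1), ‖((Pl j).eval (σ t)) • γ j‖ := norm_sum_le _ _
      _ ≤ ∑ j ∈ Finset.range (q+1), Real.sqrt ((2*(j:ℝ)+1)/τ) * Real.sqrt S := by
          apply Finset.sum_le_sum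
          intro j hj
          rw [norm_smul, Real.norm_eq_abs]
          calc |(Pl j).eval (σ t)| * ‖γ j‖ ≤ 1 * (Real.sqrt ((2*(j:ℝ)+1)/τ) * Real.sqrt S) := by
                apply mul_le_mul (pl_bound j _ (hσmem t htIcc)) (hγbd j hj)
                  (norm_nonneg _) (by norm_num)
            _ = Real.sqrt ((2*(j:ℝ)+1)/τ) * Real.sqrt S := one_mul _
      _ = (∑ j ∈ Finset.range (q+1), Real.sqrt ((2*(j:ℝ)+1)/τ)) * Real.sqrt S := by
          rw [Finset.sum_mul]
      _ ≤ M := by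
          rw [hMdef]
          exact mul_le_mul_of_nonneg_right hsumbd (Real.sqrt_nonneg _)
  -- final measure-theoretic bookkeeping
  have haebd : ∀ᵐ t ∂(volume.restrict (Ioo a b)), ‖w t‖ ≤ M := by
    filter_upwards [ae_restrict_mem measurableSet_Ioo] with t ht
    exact hpt t ht
  have hLinf : eLpNorm w ⊤ (volume.restrict (Ioo a b)) ≤ ENNReal.ofReal M := by
    rw [eLpNorm_exponent_top]
    exact eLpNormEssSup_le_of_ae_bound haebd
  have hmem : MemLp w 2 (volume.restrict (Ioo a b)) := by
    constructor
    · exact hwc.aestronglyMeasurable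
    · apply lt_of_le_of_lt (eLpNorm_le_of_ae_bound haebd)
      apply ENNReal.mul_lt_top
      · apply ENNReal.rpow_lt_top_of_nonneg (by norm_num)
        rw [Measure.restrict_apply_univ]
        exact ne_of_lt measure_Ioo_lt_top
      · exact ENNReal.ofReal_lt_top
  have h2eq := MemLp.eLpNorm_eq_integral_rpow_norm two_ne_zero ENNReal.ofNat_ne_top hmem
  have htoReal : (2:ENNReal).toReal = 2 := by norm_num
  rw [htoReal] at h2eq
  have hSint : (∫ t, ‖w t‖ ^ (2:ℝ) ∂(volume.restrict (Ioo a b))) = S := by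
    have hrpow : ∀ t : ℝ, ‖w t‖ ^ (2:ℝ) = ‖w t‖^2 := fun t => by
      rw [show (2:ℝ) = ((2:ℕ):ℝ) by norm_num, Real.rpow_natCast]
    simp_rw [hrpow]
    rw [hSdef, intervalIntegral.integral_of_le hab',
      MeasureTheory.integral_Ioc_eq_integral_Ioo]
  rw [hSint] at h2eq
  have hL2sq : (eLpNorm w 2 (volume.restrict (Ioo a b)))^2 = ENNReal.ofReal S := by
    rw [h2eq, ← ENNReal.ofReal_pow (Real.rpow_nonneg hS0 _)]
    congr 1
    rw [← Real.rpow_natCast (S ^ ((2:ℝ))⁻¹) 2, ← Real.rpow_mul hS0]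
    norm_num
  have hconstnn : (0:ℝ) ≤ ((q:ℝ)+1)^3 * τ⁻¹ :=
    mul_nonneg (by positivity) (inv_nonneg.mpr (le_of_lt hτ0))
  calc (eLpNorm w ⊤ (volume.restrict (Ioo a b)))^2
      ≤ (ENNReal.ofReal M)^2 := pow_le_pow_left' hLinf 2
    _ = ENNReal.ofReal (M^2) := (ENNReal.ofReal_pow hM0 2).symm
    _ = ENNReal.ofReal ((((q:ℝ)+1)^3 * τ⁻¹) * S) := by
        congr 1
        rw [hMdef, mul_pow, Real.sq_sqrt (div_nonneg (by positivity) (le_of_lt hτ0)),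
          Real.sq_sqrt hS0]
        ring
    _ = ENNReal.ofReal (((q:ℝ)+1)^3 * τ⁻¹) * ENNReal.ofReal S :=
        ENNReal.ofReal_mul hconstnn
    _ = ENNReal.ofReal (((q:ℝ)+1)^3 * τ⁻¹) * (eLpNorm w 2 (volume.restrict (Ioo a b)))^2 := by
        rw [hL2sq]
end

section
/- Let q ∈ ℕ, let s be an integer with 1 ≤ s ≤ q + 1, let C_P > 0, and let Z be a real Banach space. There exists a constant C > 0, depending only on q, s, and C_P, with the following property: for all real numbers a < b with τ = b − a, all r ∈ [1,∞], every linear operator P from C([a,b];Z) into the space of restrictions to [a,b] of Z-valued polynomials of degree at most q satisfying (i) Pp = p on [a,b] for every Z-valued polynomial p of degree at most q, and (ii) ‖Pg‖_{L^∞((a,b);Z)} ≤ C_P ‖g‖_{L^∞((a,b);Z)} for every g ∈ C([a,b];Z), and every s-times continuously differentiable function v : [a,b] → Z, one has ‖v − Pv‖_{L^r((a,b);Z)} ≤ C τ^s ‖v^{(s)}‖_{L^r((a,b);Z)}. -/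
open MeasureTheory Set ENNReal
open Finset Topology

section Aux
variable {Z : Type*} [NormedAddCommGroup Z] [NormedSpace ℝ Z]

lemma isPoly_shifted (q m : ℕ) (hm : m ≤ q + 1) (a : ℝ) (c : ℕ → Z) :
    IsPolyDegLE Z q (fun x => ∑ k ∈ Finset.range m, (x - a) ^ k • c k) := by
  refine ⟨fun i => ∑ k ∈ Finset.range m, ((k.choose (i : ℕ) : ℝ) * (-a) ^ (k - (i : ℕ))) • c k,
    fun t => ?_⟩
  simp only [Finset.smul_sum]
  rw [Finset.sum_comm]
  refine Finset.sum_congr rfl fun k hk => ?_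
  have hk' : k < m := Finset.mem_range.mp hk
  have hkq : k + 1 ≤ q + 1 := le_trans hk' hm
  have : (t - a) ^ k • c k
      = ∑ i ∈ Finset.range (q + 1), (t ^ i * ((k.choose i : ℝ) * (-a) ^ (k - i))) • c k := by
    rw [← Finset.sum_subset (Finset.range_subset_range.mpr hkq)
      (fun i _ hi => by
        simp only [Finset.mem_range, not_lt] at hi
        rw [Nat.choose_eq_zero_of_lt (by omega : k < i)]
        simp)]
    rw [← Finset.sum_smul, sub_eq_add_neg, add_pow]
    congr 1
    refine Finset.sum_congr rfl fun i _ => by ring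
  rw [this, Fin.sum_univ_eq_sum_range
    (fun i => t ^ i • ((k.choose i : ℝ) * (-a) ^ (k - i)) • c k)]
  refine Finset.sum_congr rfl fun i _ => ?_
  rw [smul_smul]

lemma taylor_remainder_integral [CompleteSpace Z] {v : ℝ → Z} {a b : ℝ} (hab : a < b) (n : ℕ)
    (hv : ContDiffOn ℝ (n + 1) v (Icc a b)) (x : ℝ) (hx : x ∈ Icc a b) :
    ‖v x - taylorWithinEval v n (Icc a b) a x‖ ≤
      ((b - a) ^ n / n.factorial) *
        ∫ t in a..b, ‖iteratedDerivWithin (n + 1) v (Icc a b) t‖ := by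
  set D := iteratedDerivWithin (n + 1) v (Icc a b) with hD
  have hDc : ContinuousOn D (Icc a b) :=
    hv.continuousOn_iteratedDerivWithin le_rfl (uniqueDiffOn_Icc hab)
  have hf' : DifferentiableOn ℝ (iteratedDerivWithin n v (Icc a b)) (Icc a b) :=
    hv.differentiableOn_iteratedDerivWithin (mod_cast n.lt_succ_self) (uniqueDiffOn_Icc hab)
  set g : ℝ → Z := fun t => taylorWithinEval v n (Icc a b) t x with hg
  set g' : ℝ → Z := fun t => (((n.factorial : ℝ))⁻¹ * (x - t) ^ n) • D t with hg'
  have hIsub : Icc a x ⊆ Icc a b := Icc_subset_Icc_right hx.2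
  have hderiv : ∀ t ∈ Icc a x, HasDerivWithinAt g (g' t) (Icc a x) t := fun t ht =>
    (hasDerivWithinAt_taylorWithinEval_at_Icc x hab (hIsub ht) hv.of_succ hf').mono hIsub
  have hgc : ContinuousOn g (Icc a x) := fun t ht => (hderiv t ht).continuousWithinAt
  have hg'c : ContinuousOn g' (Icc a x) :=
    (Continuous.continuousOn (by fun_prop)).smul (hDc.mono hIsub)
  have hg'int : IntervalIntegrable g' volume a x :=
    hg'c.intervalIntegrable_of_Icc hx.1
  have key : ∫ t in a..x, g' t = g x - g a := by
    refine intervalIntegral.integral_eq_sub_of_hasDeriv_right_of_le hx.1 hgc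
      (fun t ht => ?_) hg'int
    have h1 : Icc a x ∈ 𝓝 t := mem_nhds_iff.mpr ⟨Ioo a x, Ioo_subset_Icc_self, isOpen_Ioo, ht⟩
    exact ((hderiv t (Ioo_subset_Icc_self ht)).hasDerivAt h1).hasDerivWithinAt
  have hgx : g x = v x := taylorWithinEval_self v n (Icc a b) x
  have step1 : ‖v x - g a‖ ≤ ∫ t in a..x, ‖g' t‖ := by
    rw [← hgx, ← key]
    exact intervalIntegral.norm_integral_le_integral_norm hx.1
  refine step1.trans ?_
  have hk : (0:ℝ) ≤ (b - a) ^ n / n.factorial :=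
    div_nonneg (pow_nonneg (by linarith) n) (Nat.cast_nonneg _)
  have step2 : ∫ t in a..x, ‖g' t‖ ≤ ∫ t in a..x, ((b - a) ^ n / n.factorial) * ‖D t‖ := by
    refine intervalIntegral.integral_mono_on hx.1 (hg'c.norm.intervalIntegrable_of_Icc hx.1)
      (((continuousOn_const.mul (hDc.mono hIsub).norm)).intervalIntegrable_of_Icc hx.1)
      (fun t ht => ?_)
    rw [hg', norm_smul, Real.norm_eq_abs]
    have h1 : |(n.factorial : ℝ)⁻¹ * (x - t) ^ n| ≤ (b - a) ^ n / n.factorial := by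
      rw [abs_mul, abs_pow, abs_inv, Nat.abs_cast]
      rw [abs_of_nonneg (by linarith [ht.2] : (0:ℝ) ≤ x - t), div_eq_inv_mul]
      gcongr <;> linarith [ht.1, ht.2, hx.1, hx.2]
    exact mul_le_mul_of_nonneg_right h1 (norm_nonneg _)
  refine step2.trans ?_
  rw [intervalIntegral.integral_const_mul]
  gcongr
  refine intervalIntegral.integral_mono_interval le_rfl hx.1 hx.2 ?_
    (hDc.norm.intervalIntegrable_of_Icc hab.le)
  · filter_upwards with t using norm_nonneg _

lemma IsPolyDegLE.continuous' {q : ℕ} {f : ℝ → Z} (h : IsPolyDegLE Z q f) : Continuous f := by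
  obtain ⟨c, hc⟩ := h
  rw [funext hc]
  exact continuous_finset_sum _ fun i _ => (continuous_pow _).smul continuous_const


end Aux

/-- **Estimate for a generic projector.** Any linear projection `P` onto polynomials of degree
at most `q` in time that reproduces such polynomials on `[a,b]` and is stable in the
`L^∞((a,b);Z)` norm with constant `C_P` satisfies, for every `s`-times continuously
differentiable `v` and every `r ∈ [1,∞]`,
`‖v − Pv‖_{L^r((a,b);Z)} ≤ C τ^s ‖v^{(s)}‖_{L^r((a,b);Z)}`,
with a constant `C` depending only on `q`, `s`, and `C_P`. -/
theorem generic_projector_estimate (q s : ℕ) (hs1 : 1 ≤ s) (hs2 : s ≤ q + 1)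
    (C_P : ℝ) (hCP : 0 < C_P)
    (Z : Type*) [NormedAddCommGroup Z] [NormedSpace ℝ Z] [CompleteSpace Z] :
    ∃ C : ℝ, 0 < C ∧
      ∀ (a b τ : ℝ), a < b → τ = b - a →
        ∀ r : ℝ≥0∞, 1 ≤ r →
          ∀ P : (ℝ → Z) → (ℝ → Z),
            (∀ f g : ℝ → Z, ContinuousOn f (Icc a b) → ContinuousOn g (Icc a b) →
              ∀ t ∈ Icc a b, P (f + g) t = P f t + P g t) →
            (∀ (c : ℝ) (f : ℝ → Z), ContinuousOn f (Icc a b) →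
              ∀ t ∈ Icc a b, P (c • f) t = c • P f t) →
            (∀ f : ℝ → Z, ContinuousOn f (Icc a b) →
              ∃ pf : ℝ → Z, IsPolyDegLE Z q pf ∧ ∀ t ∈ Icc a b, P f t = pf t) →
            (∀ pf : ℝ → Z, IsPolyDegLE Z q pf → ∀ t ∈ Icc a b, P pf t = pf t) →
            (∀ g : ℝ → Z, ContinuousOn g (Icc a b) →
              eLpNorm (P g) ⊤ (volume.restrict (Ioo a b)) ≤
                ENNReal.ofReal C_P * eLpNorm g ⊤ (volume.restrict (Ioo a b))) →
            ∀ v : ℝ → Z, ContDiffOn ℝ s v (Icc a b) →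
              eLpNorm (fun u => v u - P v u) r (volume.restrict (Ioo a b)) ≤
                ENNReal.ofReal (C * τ ^ s) *
                  eLpNorm (iteratedDerivWithin s v (Icc a b)) r (volume.restrict (Ioo a b)) := by
  refine ⟨1 + C_P, by linarith, ?_⟩
  obtain ⟨n, rfl⟩ : ∃ n, s = n + 1 := ⟨s - 1, by omega⟩
  intro a b τ hab hτ r hr P hadd hsmul hrange hproj hstab v hv
  have hτpos : 0 < τ := by rw [hτ]; linarith
  set μ := volume.restrict (Ioo a b) with hμ
  have hμuniv : μ univ = ENNReal.ofReal τ := by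
    rw [hμ, Measure.restrict_apply_univ, Real.volume_Ioo, hτ]
  have hud := uniqueDiffOn_Icc hab
  have hv' : ContDiffOn ℝ ((n : ℕ∞) + 1) v (Icc a b) := by exact_mod_cast hv
  set D := iteratedDerivWithin (n + 1) v (Icc a b) with hDdef
  have hDc : ContinuousOn D (Icc a b) := hv'.continuousOn_iteratedDerivWithin le_rfl hud
  have hvc : ContinuousOn v (Icc a b) := hv.continuousOn
  set p : ℝ → Z := fun x => taylorWithinEval v n (Icc a b) a x with hpdef
  have hp_poly : IsPolyDegLE Z q p := by
    have h := isPoly_shifted (Z := Z) q (n + 1) hs2 a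
      (fun k => ((k.factorial : ℝ))⁻¹ • iteratedDerivWithin k v (Icc a b) a)
    have hpe : p = fun x => ∑ k ∈ Finset.range (n + 1),
        (x - a) ^ k • ((k.factorial : ℝ))⁻¹ • iteratedDerivWithin k v (Icc a b) a := by
      funext x
      have hx0 : p x = taylorWithinEval v n (Icc a b) a x := rfl
      rw [hx0, taylor_within_apply]
      exact Finset.sum_congr rfl fun k _ => by rw [smul_smul, mul_comm]
    rw [hpe]; exact h
  have hpc : Continuous p := hp_poly.continuous'
  set w : ℝ → Z := fun u => v u - p u with hwdef
  have hwc : ContinuousOn w (Icc a b) := hvc.sub hpc.continuousOn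
  have hkey : ∀ t ∈ Icc a b, v t - P v t = w t - P w t := by
    intro t ht
    have h1 : P w t = P v t - p t := by
      have hnegp : ContinuousOn ((-1 : ℝ) • p) (Icc a b) := hpc.continuousOn.const_smul _
      have hwe : w = v + (-1 : ℝ) • p := by
        funext u; simp [hwdef, sub_eq_add_neg]
      rw [hwe, hadd v ((-1 : ℝ) • p) hvc hnegp t ht, hsmul (-1) p hpc.continuousOn t ht,
        hproj p hp_poly t ht]
      simp [sub_eq_add_neg]
    rw [h1]
    simp only [hwdef]
    abel
  obtain ⟨pw, hpw_poly, hpw⟩ := hrange w hwc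
  have hIooIcc : Ioo a b ⊆ Icc a b := Ioo_subset_Icc_self
  have haeIoo : ∀ g h : ℝ → Z, (∀ t ∈ Ioo a b, g t = h t) → g =ᵐ[μ] h := fun g h hgh =>
    (ae_restrict_mem measurableSet_Ioo).mono hgh
  have hw_meas : AEStronglyMeasurable w μ :=
    (hwc.mono hIooIcc).aestronglyMeasurable measurableSet_Ioo
  have hPw_meas : AEStronglyMeasurable (P w) μ :=
    (hpw_poly.continuous'.aestronglyMeasurable).congr
      (haeIoo pw (P w) fun t ht => (hpw t (hIooIcc ht)).symm)
  have hf_meas : AEStronglyMeasurable (fun u => v u - P v u) μ :=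
    (hw_meas.sub hPw_meas).congr
      (haeIoo _ _ fun t ht => (hkey t (hIooIcc ht)).symm)
  have hD_meas : AEStronglyMeasurable D μ :=
    (hDc.mono hIooIcc).aestronglyMeasurable measurableSet_Ioo
  set M : ℝ := τ ^ n / n.factorial * ∫ t in a..b, ‖D t‖ with hMdef
  have hbound : ∀ x ∈ Icc a b, ‖w x‖ ≤ M := by
    intro x hx
    have h := taylor_remainder_integral hab n hv' x hx
    rw [hMdef, hτ]
    exact h
  have hLinfw : eLpNorm w ⊤ μ ≤ ENNReal.ofReal M := by
    rw [eLpNorm_exponent_top]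
    exact eLpNormEssSup_le_of_ae_bound
      ((ae_restrict_mem measurableSet_Ioo).mono fun x hx => hbound x (hIooIcc hx))
  have hLinff : eLpNorm (fun u => v u - P v u) ⊤ μ ≤
      (1 + ENNReal.ofReal C_P) * ENNReal.ofReal M := by
    calc eLpNorm (fun u => v u - P v u) ⊤ μ
        = eLpNorm (w - P w) ⊤ μ := eLpNorm_congr_ae (haeIoo _ _ fun t ht => by
            simpa using hkey t (hIooIcc ht))
      _ ≤ eLpNorm w ⊤ μ + eLpNorm (P w) ⊤ μ := eLpNorm_sub_le hw_meas hPw_meas le_top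
      _ ≤ ENNReal.ofReal M + ENNReal.ofReal C_P * ENNReal.ofReal M :=
          add_le_add hLinfw ((hstab w hwc).trans (mul_le_mul_right hLinfw _))
      _ = (1 + ENNReal.ofReal C_P) * ENNReal.ofReal M := by ring
  have hD_int : IntegrableOn D (Ioo a b) := (hDc.integrableOn_Icc).mono_set hIooIcc
  have h1D : ENNReal.ofReal (∫ t in a..b, ‖D t‖) = eLpNorm D 1 μ := by
    rw [eLpNorm_one_eq_lintegral_enorm, intervalIntegral.integral_of_le hab.le,
      integral_Ioc_eq_integral_Ioo, ← ofReal_integral_norm_eq_lintegral_enorm hD_int]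
  set T := ENNReal.ofReal τ with hTdef
  have hT0 : T ≠ 0 := (ENNReal.ofReal_pos.mpr hτpos).ne'
  have hTtop : T ≠ ⊤ := ENNReal.ofReal_ne_top
  have hHolder1 : eLpNorm D 1 μ ≤ eLpNorm D r μ * T ^ (1 - 1 / r.toReal) := by
    have h := eLpNorm_le_eLpNorm_mul_rpow_measure_univ hr hD_meas
    rw [hμuniv] at h
    simpa using h
  have hHolder2 : eLpNorm (fun u => v u - P v u) r μ ≤
      eLpNorm (fun u => v u - P v u) ⊤ μ * T ^ (1 / r.toReal) := by
    have h := eLpNorm_le_eLpNorm_mul_rpow_measure_univ (le_top (a := r)) hf_meas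
    rw [hμuniv] at h
    simpa using h
  have hTT : T ^ (1 - 1 / r.toReal) * T ^ (1 / r.toReal) = T := by
    rw [← ENNReal.rpow_add _ _ hT0 hTtop, sub_add_cancel, ENNReal.rpow_one]
  set E := eLpNorm D r μ with hEdef
  calc eLpNorm (fun u => v u - P v u) r μ
      ≤ eLpNorm (fun u => v u - P v u) ⊤ μ * T ^ (1 / r.toReal) := hHolder2
    _ ≤ ((1 + ENNReal.ofReal C_P) * ENNReal.ofReal M) * T ^ (1 / r.toReal) :=
        mul_le_mul_left hLinff _
    _ = (1 + ENNReal.ofReal C_P) * ENNReal.ofReal (τ ^ n / n.factorial) *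
          eLpNorm D 1 μ * T ^ (1 / r.toReal) := by
        rw [hMdef, ENNReal.ofReal_mul (by positivity), h1D]; ring
    _ ≤ (1 + ENNReal.ofReal C_P) * ENNReal.ofReal (τ ^ n / n.factorial) *
          (E * T ^ (1 - 1 / r.toReal)) * T ^ (1 / r.toReal) :=
        mul_le_mul_left (mul_le_mul_right hHolder1 _) _
    _ = (1 + ENNReal.ofReal C_P) * ENNReal.ofReal (τ ^ n / n.factorial) * E *
          (T ^ (1 - 1 / r.toReal) * T ^ (1 / r.toReal)) := by ring
    _ = ((1 + ENNReal.ofReal C_P) * ENNReal.ofReal (τ ^ n / n.factorial) * T) * E := by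
        rw [hTT]; ring
    _ ≤ ENNReal.ofReal ((1 + C_P) * τ ^ (n + 1)) * E := by
        refine mul_le_mul_left ?_ E
        have e1 : (1 : ℝ≥0∞) + ENNReal.ofReal C_P = ENNReal.ofReal (1 + C_P) := by
          rw [ENNReal.ofReal_add zero_le_one hCP.le, ENNReal.ofReal_one]
        have e2 : ENNReal.ofReal (τ ^ n / n.factorial) ≤ ENNReal.ofReal (τ ^ n) :=
          ENNReal.ofReal_le_ofReal
            (div_le_self (by positivity) (Nat.one_le_cast.mpr n.factorial_pos))
        calc (1 + ENNReal.ofReal C_P) * ENNReal.ofReal (τ ^ n / n.factorial) * T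
            ≤ ENNReal.ofReal (1 + C_P) * ENNReal.ofReal (τ ^ n) * ENNReal.ofReal τ := by
              rw [e1, hTdef]; exact mul_le_mul' (mul_le_mul_right e2 _) le_rfl
          _ = ENNReal.ofReal ((1 + C_P) * τ ^ (n + 1)) := by
              rw [← ENNReal.ofReal_mul (by linarith), ← ENNReal.ofReal_mul
                (mul_nonneg (by linarith) (by positivity))]
              congr 1
              ring
end

section
/- Let H be a real Hilbert space, q ∈ ℕ, r ∈ [1,∞], and a < b with τ = b − a. Let L_0, …, L_q : ℝ → ℝ be continuous functions satisfying ∫_a^b L_i(t) L_j(t) dt = (τ/(2i+1)) δ_{ij} for all 0 ≤ i, j ≤ q, and |L_i(t)| ≤ 1 for all t ∈ [a,b] and all i. For v ∈ L^r((a,b);H) define Πv(t) := Σ_{i=0}^{q} ((2i+1)/τ) (∫_a^b v(s) L_i(s) ds) L_i(t). Then ‖Πv‖_{L^r((a,b);H)} ≤ (q+1)² ‖v‖_{L^r((a,b);H)}. -/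
open MeasureTheory Set ENNReal

private lemma sum_odd_real (n : ℕ) :
    ∑ i ∈ Finset.range n, (2 * (i : ℝ) + 1) = (n : ℝ) ^ 2 := by
  induction n with
  | zero => simp
  | succ n ih => rw [Finset.sum_range_succ, ih]; push_cast; ring

/-- **Stability of the `L²(0,T)`-orthogonal projection (Legendre expansion form).**
Given rescaled Legendre polynomials `L_0, …, L_q` on `(a,b)` (characterized by their
orthogonality relations and the uniform bound `|L_i| ≤ 1` on `[a,b]`), the projection
`Πv(t) = ∑_{i=0}^{q} ((2i+1)/τ) (∫_a^b v(s) L_i(s) ds) L_i(t)` satisfies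
`‖Πv‖_{L^r((a,b);H)} ≤ (q+1)² ‖v‖_{L^r((a,b);H)}` for every `r ∈ [1,∞]`. -/
theorem legendre_projection_stability (H : Type*) [NormedAddCommGroup H]
    [InnerProductSpace ℝ H] [CompleteSpace H]
    (q : ℕ) (r : ℝ≥0∞) (hr : 1 ≤ r) (a b τ : ℝ) (hab : a < b) (hτ : τ = b - a)
    (L : Fin (q + 1) → ℝ → ℝ) (hLcont : ∀ i, Continuous (L i))
    (horth : ∀ i j : Fin (q + 1),
      (∫ t in a..b, L i t * L j t) = if i = j then τ / (2 * (i : ℝ) + 1) else 0)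
    (hbd : ∀ i : Fin (q + 1), ∀ t ∈ Icc a b, |L i t| ≤ 1)
    (v : ℝ → H) (hv : MemLp v r (volume.restrict (Ioo a b))) :
    eLpNorm
        (fun t => ∑ i : Fin (q + 1),
          ((2 * (i : ℝ) + 1) / τ * L i t) • (∫ s in a..b, L i s • v s))
        r (volume.restrict (Ioo a b)) ≤
      ENNReal.ofReal (((q : ℝ) + 1) ^ 2) * eLpNorm v r (volume.restrict (Ioo a b)) := by
  have hab' : a ≤ b := hab.le
  have hτpos : 0 < τ := by rw [hτ]; linarith
  have hμeq : volume.restrict (Ioo a b) = volume.restrict (Ioc a b) :=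
    Measure.restrict_congr_set Ioo_ae_eq_Ioc
  rw [hμeq] at hv ⊢
  set μ := volume.restrict (Ioc a b) with hμdef
  have hμuniv : μ Set.univ = ENNReal.ofReal τ := by
    simp [hμdef, Real.volume_Ioc, hτ]
  have hfin : IsFiniteMeasure μ := ⟨by rw [hμuniv]; exact ENNReal.ofReal_lt_top⟩
  have hvm : AEStronglyMeasurable v μ := hv.1
  have hv1 : MemLp v 1 μ := hv.mono_exponent hr
  have hvint : Integrable v μ := memLp_one_iff_integrable.mp hv1
  set N := eLpNorm v r μ with hN
  set T := ENNReal.ofReal τ with hT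
  have hT0 : T ≠ 0 := by
    simp only [hT, ne_eq, ENNReal.ofReal_eq_zero, not_le]; exact hτpos
  have hTtop : T ≠ ∞ := ENNReal.ofReal_ne_top
  set w : Fin (q + 1) → H := fun i => ∫ s in a..b, L i s • v s with hw
  -- bound on ‖w i‖
  have hwi : ∀ i, ENNReal.ofReal ‖w i‖ ≤ N * T ^ (1 - r.toReal⁻¹) := by
    intro i
    have h1 : ‖w i‖ ≤ ∫ s, ‖v s‖ ∂μ := by
      have hwieq : w i = ∫ s in Ioc a b, L i s • v s :=
        intervalIntegral.integral_of_le hab'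
      rw [hwieq]
      refine norm_integral_le_of_norm_le hvint.norm ?_
      filter_upwards [ae_restrict_mem measurableSet_Ioc] with s hs
      rw [norm_smul]
      have h2 : ‖L i s‖ ≤ 1 := hbd i s (Ioc_subset_Icc_self hs)
      calc ‖L i s‖ * ‖v s‖ ≤ 1 * ‖v s‖ :=
            mul_le_mul_of_nonneg_right h2 (norm_nonneg _)
        _ = ‖v s‖ := one_mul _
    have h2 : ENNReal.ofReal ‖w i‖ ≤ eLpNorm v 1 μ := by
      rw [eLpNorm_one_eq_lintegral_enorm, ← ofReal_integral_norm_eq_lintegral_enorm hvint]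
      exact ENNReal.ofReal_le_ofReal h1
    refine h2.trans ?_
    have h3 := eLpNorm_le_eLpNorm_mul_rpow_measure_univ hr hvm
    simpa [hμuniv, one_div] using h3
  -- per-term bound
  have hterm : ∀ i : Fin (q + 1),
      eLpNorm (fun t => ((2 * (i : ℝ) + 1) / τ * L i t) • w i) r μ ≤
        ENNReal.ofReal (2 * (i : ℝ) + 1) * N := by
    intro i
    set c : ℝ := (2 * (i : ℝ) + 1) / τ with hc
    have hci : 0 < c := by positivity
    have hbound : ∀ᵐ t ∂μ, ‖(c * L i t) • w i‖ ≤ c * ‖w i‖ := by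
      filter_upwards [ae_restrict_mem measurableSet_Ioc] with t ht
      rw [norm_smul, norm_mul]
      have hL : ‖L i t‖ ≤ 1 := hbd i t (Ioc_subset_Icc_self ht)
      have hnc : ‖c‖ = c := abs_of_pos hci
      rw [hnc]
      calc c * ‖L i t‖ * ‖w i‖ ≤ c * 1 * ‖w i‖ := by gcongr
        _ = c * ‖w i‖ := by ring
    have h := eLpNorm_le_of_ae_bound (p := r) hbound
    rw [hμuniv] at h
    calc eLpNorm (fun t => (c * L i t) • w i) r μ
        ≤ T ^ r.toReal⁻¹ * (ENNReal.ofReal c * ENNReal.ofReal ‖w i‖) := by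
          rw [ENNReal.ofReal_mul hci.le] at h; exact h
      _ ≤ T ^ r.toReal⁻¹ * (ENNReal.ofReal c * (N * T ^ (1 - r.toReal⁻¹))) := by
          gcongr; exact hwi i
      _ = ENNReal.ofReal c * (T ^ r.toReal⁻¹ * T ^ (1 - r.toReal⁻¹)) * N := by ring
      _ = ENNReal.ofReal c * T * N := by
          rw [← ENNReal.rpow_add _ _ hT0 hTtop]
          norm_num
      _ = ENNReal.ofReal (2 * (i : ℝ) + 1) * N := by
          rw [hT, ← ENNReal.ofReal_mul hci.le, hc, div_mul_cancel₀ _ hτpos.ne']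
  -- sum up
  have hmeas : ∀ i : Fin (q + 1),
      AEStronglyMeasurable (fun t => ((2 * (i : ℝ) + 1) / τ * L i t) • w i) μ := fun i =>
    ((continuous_const.mul (hLcont i)).smul continuous_const).aestronglyMeasurable
  have hfun : (fun t => ∑ i : Fin (q + 1), ((2 * (i : ℝ) + 1) / τ * L i t) • w i) =
      ∑ i : Fin (q + 1), fun t => ((2 * (i : ℝ) + 1) / τ * L i t) • w i := by
    funext t; simp
  calc eLpNorm (fun t => ∑ i : Fin (q + 1), ((2 * (i : ℝ) + 1) / τ * L i t) • w i) r μ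
      ≤ ∑ i : Fin (q + 1),
          eLpNorm (fun t => ((2 * (i : ℝ) + 1) / τ * L i t) • w i) r μ := by
        rw [hfun]; exact eLpNorm_sum_le (fun i _ => hmeas i) hr
    _ ≤ ∑ i : Fin (q + 1), ENNReal.ofReal (2 * (i : ℝ) + 1) * N :=
        Finset.sum_le_sum fun i _ => hterm i
    _ = (∑ i : Fin (q + 1), ENNReal.ofReal (2 * (i : ℝ) + 1)) * N := by
        rw [Finset.sum_mul]
    _ = ENNReal.ofReal (((q : ℝ) + 1) ^ 2) * N := by
        rw [← ENNReal.ofReal_sum_of_nonneg (fun i _ => by positivity)]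
        congr 1
        rw [Fin.sum_univ_eq_sum_range (fun i => 2 * (i : ℝ) + 1), sum_odd_real]
        push_cast; ring
end

section
/- Let H be a real Hilbert space with inner product ⟨·,·⟩, let q ≥ 2 be an integer, and let a < b with τ = b − a, λ = 1/(2τ), and φ(t) = 1 − λ(t − a). Let w be an H-valued polynomial of degree at most q − 1 and let g be an H-valued polynomial of degree at most q − 1 such that g(a) = w(a) and ∫_a^b ⟨φ(t) w(t) − g(t), p(t)⟩ dt = 0 for every H-valued polynomial p of degree at most q − 2. Then ∫_a^b ⟨w(t), φ(t) w(t) − g(t)⟩ dt ≤ 0. -/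
open MeasureTheory Set RealInnerProductSpace
open Polynomial intervalIntegral Finset

section ThomeeAux

lemma polyII_s12 (p q : Polynomial ℝ) (a b : ℝ) :
    IntervalIntegrable (fun t => p.eval t * q.eval t) volume a b :=
  (p.continuous.mul q.continuous).intervalIntegrable _ _

-- basic integration by parts for polynomials
lemma poly_ibp (v p : Polynomial ℝ) (a b : ℝ) :
    ∫ t in a..b, v.eval t * p.derivative.eval t
      = (v*p).eval b - (v*p).eval a - ∫ t in a..b, v.derivative.eval t * p.eval t := by
  have h : ∫ t in a..b, (v.derivative.eval t * p.eval t + v.eval t * p.derivative.eval t)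
      = (v*p).eval b - (v*p).eval a := by
    apply intervalIntegral.integral_eq_sub_of_hasDerivAt
    · intro t _
      simpa [Polynomial.derivative_mul] using (v*p).hasDerivAt t
    · exact ((v.derivative.continuous.mul p.continuous).add
        (v.continuous.mul p.derivative.continuous)).intervalIntegrable _ _
  rw [intervalIntegral.integral_add (polyII_s12 v.derivative p a b)
      (polyII_s12 v p.derivative a b)] at h
  linarith

lemma poly_ibp_iter (u v : Polynomial ℝ) (a b : ℝ) (m : ℕ)
    (ha : ∀ j < m, (derivative^[j] u).eval a = 0)
    (hb : ∀ j < m, (derivative^[j] u).eval b = 0) :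
    ∫ t in a..b, v.eval t * (derivative^[m] u).eval t
      = (-1:ℝ)^m * ∫ t in a..b, (derivative^[m] v).eval t * u.eval t := by
  induction m generalizing v with
  | zero => simp
  | succ m ih =>
    have h1 : ∫ t in a..b, v.eval t * (derivative^[m+1] u).eval t
        = - ∫ t in a..b, v.derivative.eval t * (derivative^[m] u).eval t := by
      rw [Function.iterate_succ_apply', poly_ibp]
      have hma := ha m (Nat.lt_succ_self m)
      have hmb := hb m (Nat.lt_succ_self m)
      simp [hma, hmb]
    rw [h1, ih v.derivative (fun j hj => ha j (hj.trans (Nat.lt_succ_self m)))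
      (fun j hj => hb j (hj.trans (Nat.lt_succ_self m)))]
    rw [← Function.iterate_succ_apply]
    ring

example : True := trivial


lemma iter_deriv_root (r : ℝ) (k m : ℕ) (s : Polynomial ℝ) (h : m < k) :
    (derivative^[m] ((X - C r)^k * s)).eval r = 0 := by
  rw [Polynomial.iterate_derivative_mul, Polynomial.eval_finset_sum]
  apply Finset.sum_eq_zero
  intro i hi
  rw [Polynomial.eval_smul, Polynomial.iterate_derivative_X_sub_pow]
  have hk : k - (m - i) ≠ 0 := by
    have : m - i ≤ m := Nat.sub_le m i
    omega
  rw [Polynomial.eval_mul, Polynomial.eval_smul, Polynomial.eval_pow]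
  simp [zero_pow hk]

lemma iter_deriv_Xpow (k : ℕ) : derivative^[k] (X^k : Polynomial ℝ) = C (k.factorial : ℝ) := by
  rw [Polynomial.iterate_derivative_X_pow_eq_C_mul]
  simp [Nat.descFactorial_self]

lemma iter_deriv_Xpow_zero (j k : ℕ) (h : j < k) :
    derivative^[k] (X^j : Polynomial ℝ) = 0 := by
  apply Polynomial.iterate_derivative_eq_zero
  simpa [Polynomial.natDegree_X_pow] using h


noncomputable def psiP (n : ℕ) (a b : ℝ) : Polynomial ℝ :=
  derivative^[n] ((X - C a)^(n+1) * (X - C b)^n)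

noncomputable def LP (n : ℕ) (a b : ℝ) : Polynomial ℝ :=
  derivative^[n] ((X - C a)^n * (X - C b)^n)

variable (n : ℕ) (a b : ℝ)

lemma u_monic : ((X - C a)^(n+1) * ((X : Polynomial ℝ) - C b)^n).Monic :=
  ((monic_X_sub_C a).pow _).mul ((monic_X_sub_C b).pow _)

lemma u_natDegree : ((X - C a)^(n+1) * ((X : Polynomial ℝ) - C b)^n).natDegree = 2*n+1 := by
  rw [(((monic_X_sub_C a).pow _)).natDegree_mul (((monic_X_sub_C b).pow _))]
  simp [natDegree_pow]
  ring

lemma u1_monic : ((X - C a)^n * ((X : Polynomial ℝ) - C b)^n).Monic :=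
  ((monic_X_sub_C a).pow _).mul ((monic_X_sub_C b).pow _)

lemma u1_natDegree : ((X - C a)^n * ((X : Polynomial ℝ) - C b)^n).natDegree = 2*n := by
  rw [(((monic_X_sub_C a).pow _)).natDegree_mul (((monic_X_sub_C b).pow _))]
  simp [natDegree_pow]
  ring

lemma psi_coeff : (psiP n a b).coeff (n+1) = ((2*n+1).descFactorial n : ℝ) := by
  rw [psiP, Polynomial.coeff_iterate_derivative]
  have h1 : n+1+n = 2*n+1 := by ring
  rw [h1, ← u_natDegree n a b, Polynomial.Monic.coeff_natDegree (u_monic n a b)]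
  simp

lemma psi_coeff_pos : 0 < (psiP n a b).coeff (n+1) := by
  rw [psi_coeff]
  have : (2*n+1).descFactorial n ≠ 0 := by
    rw [Ne, Nat.descFactorial_eq_zero_iff_lt]; omega
  exact_mod_cast Nat.pos_of_ne_zero this

lemma psi_natDegree : (psiP n a b).natDegree ≤ n+1 := by
  refine (Polynomial.natDegree_iterate_derivative _ n).trans ?_
  rw [u_natDegree]; omega

lemma L_coeff : (LP n a b).coeff n = ((2*n).descFactorial n : ℝ) := by
  rw [LP, Polynomial.coeff_iterate_derivative]
  have h1 : n+n = 2*n := by ring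
  rw [h1, ← u1_natDegree n a b, Polynomial.Monic.coeff_natDegree (u1_monic n a b)]
  simp

lemma L_coeff_pos : 0 < (LP n a b).coeff n := by
  rw [L_coeff]
  have : (2*n).descFactorial n ≠ 0 := by
    rw [Ne, Nat.descFactorial_eq_zero_iff_lt]; omega
  exact_mod_cast Nat.pos_of_ne_zero this

lemma L_natDegree : (LP n a b).natDegree ≤ n := by
  refine (Polynomial.natDegree_iterate_derivative _ n).trans ?_
  rw [u1_natDegree]; omega
variable (n : ℕ) (a b : ℝ)

lemma u_bound_a : ∀ j < n, (derivative^[j] ((X - C a)^(n+1) * ((X:Polynomial ℝ) - C b)^n)).eval a = 0 :=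
  fun j hj => iter_deriv_root a (n+1) j _ (by omega)

lemma u_bound_b : ∀ j < n, (derivative^[j] ((X - C a)^(n+1) * ((X:Polynomial ℝ) - C b)^n)).eval b = 0 := by
  intro j hj
  rw [mul_comm]
  exact iter_deriv_root b n j _ hj

lemma u1_bound_a : ∀ j < n, (derivative^[j] ((X - C a)^n * ((X:Polynomial ℝ) - C b)^n)).eval a = 0 :=
  fun j hj => iter_deriv_root a n j _ hj

lemma u1_bound_b : ∀ j < n, (derivative^[j] ((X - C a)^n * ((X:Polynomial ℝ) - C b)^n)).eval b = 0 := by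
  intro j hj
  rw [mul_comm]
  exact iter_deriv_root b n j _ hj

lemma psi_eval_a : (psiP n a b).eval a = 0 :=
  iter_deriv_root a (n+1) n _ (by omega)

lemma psi_orth (k : ℕ) (hk : k < n) : ∫ t in a..b, t^k * (psiP n a b).eval t = 0 := by
  have h := poly_ibp_iter ((X - C a)^(n+1) * (X - C b)^n) (X^k) a b n
    (u_bound_a n a b) (u_bound_b n a b)
  rw [iter_deriv_Xpow_zero k n hk] at h
  simpa [psiP] using h

lemma L_orth (k : ℕ) (hk : k < n) : ∫ t in a..b, t^k * (LP n a b).eval t = 0 := by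
  have h := poly_ibp_iter ((X - C a)^n * (X - C b)^n) (X^k) a b n
    (u1_bound_a n a b) (u1_bound_b n a b)
  rw [iter_deriv_Xpow_zero k n hk] at h
  simpa [LP] using h

lemma psi_int_nonneg (hab : a ≤ b) : 0 ≤ ∫ t in a..b, t^n * (psiP n a b).eval t := by
  have h := poly_ibp_iter ((X - C a)^(n+1) * (X - C b)^n) (X^n) a b n
    (u_bound_a n a b) (u_bound_b n a b)
  rw [iter_deriv_Xpow n] at h
  have h2 : ∫ t in a..b, t^n * (psiP n a b).eval t
      = ∫ t in a..b, (n.factorial : ℝ) * ((t-a)^(n+1) * (b-t)^n) := by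
    rw [show (∫ t in a..b, t^n * (psiP n a b).eval t)
        = ∫ t in a..b, (X^n : Polynomial ℝ).eval t * (psiP n a b).eval t by simp]
    rw [psiP, h, ← intervalIntegral.integral_const_mul]
    apply intervalIntegral.integral_congr
    intro t _
    have hbt : (b-t)^n = (-1:ℝ)^n * (t-b)^n := by
      rw [← mul_pow]; congr 1; ring
    simp only [eval_mul, eval_pow, eval_sub, eval_X, eval_C]
    rw [hbt]; ring
  rw [h2]
  apply intervalIntegral.integral_nonneg hab
  intro t ht
  have h1 : (0:ℝ) ≤ t - a := by linarith [ht.1]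
  have h2 : (0:ℝ) ≤ b - t := by linarith [ht.2]
  positivity

lemma L_eval_a (hab : a ≠ b) : (LP n a b).eval a ≠ 0 := by
  have : (LP n a b).eval a = (n.factorial : ℝ) * (a-b)^n := by
    rw [LP, Polynomial.iterate_derivative_mul, Polynomial.eval_finset_sum]
    rw [Finset.sum_eq_single_of_mem 0 (Finset.mem_range.mpr (Nat.succ_pos n))]
    · simp [Polynomial.iterate_derivative_X_sub_pow_self]
    · intro i hi hine
      have hin : n - (n - i) = i := by
        have := Finset.mem_range.mp hi; omega
      rw [Polynomial.iterate_derivative_X_sub_pow, hin]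
      have : i ≠ 0 := hine
      simp [eval_smul, eval_mul, eval_pow, zero_pow this]
  rw [this]
  apply mul_ne_zero
  · exact_mod_cast Nat.factorial_ne_zero n
  · exact pow_ne_zero n (sub_ne_zero.mpr hab)

lemma L_ne_zero (hab : a ≠ b) : LP n a b ≠ 0 := by
  intro h
  exact L_eval_a n a b hab (by rw [h]; simp)

lemma sq_int_pos (P : Polynomial ℝ) (hP : P ≠ 0) (hab : a < b) :
    0 < ∫ t in a..b, P.eval t * P.eval t := by
  rw [intervalIntegral.integral_pos_iff_support_of_nonneg_ae
    (Filter.Eventually.of_forall (fun t => mul_self_nonneg _)) (polyII_s12 P P a b)]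
  refine ⟨hab, ?_⟩
  have hroots : ({x | P.IsRoot x} : Set ℝ).Finite := Polynomial.finite_setOf_isRoot hP
  have hsub : Ioc a b \ {x | P.IsRoot x} ⊆ (Function.support fun t => P.eval t * P.eval t) ∩ Ioc a b := by
    intro x hx
    refine ⟨?_, hx.1⟩
    simp only [Function.mem_support]
    have : ¬ P.IsRoot x := hx.2
    simp only [Polynomial.IsRoot] at this
    exact mul_ne_zero this this
  calc (0:ENNReal) < volume (Ioc a b) := by
        rw [Real.volume_Ioc]
        exact ENNReal.ofReal_pos.mpr (by linarith)
    _ = volume (Ioc a b \ {x | P.IsRoot x}) := (measure_diff_null (hroots.measure_zero _)).symm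
    _ ≤ _ := measure_mono hsub
lemma iiPow (k : ℕ) (P : Polynomial ℝ) (a b : ℝ) :
    IntervalIntegrable (fun t => t^k * P.eval t) volume a b :=
  ((continuous_pow k).mul P.continuous).intervalIntegrable _ _

lemma int_monomial_sub (a b c : ℝ) (P Q : Polynomial ℝ) (k : ℕ) :
    ∫ t in a..b, t^k * (P - Polynomial.C c * Q).eval t
      = (∫ t in a..b, t^k * P.eval t) - c * ∫ t in a..b, t^k * Q.eval t := by
  have h : (fun t => t^k * (P - C c * Q).eval t)
      = fun t => t^k * P.eval t - c * (t^k * Q.eval t) := by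
    funext t; simp; ring
  rw [h, intervalIntegral.integral_sub (iiPow k P a b) ((iiPow k Q a b).const_mul c),
    intervalIntegral.integral_const_mul]

lemma int_poly_sub (a b c : ℝ) (L P Q : Polynomial ℝ) :
    ∫ t in a..b, L.eval t * (P - Polynomial.C c * Q).eval t
      = (∫ t in a..b, L.eval t * P.eval t) - c * ∫ t in a..b, L.eval t * Q.eval t := by
  have h : (fun t => L.eval t * (P - C c * Q).eval t)
      = fun t => L.eval t * P.eval t - c * (L.eval t * Q.eval t) := by
    funext t; simp; ring
  rw [h, intervalIntegral.integral_sub (polyII_s12 L P a b) ((polyII_s12 L Q a b).const_mul c),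
    intervalIntegral.integral_const_mul]

lemma orth_of_lowdeg (a b : ℝ) (U S : Polynomial ℝ) (m : ℕ)
    (h : ∀ k ≤ m, ∫ t in a..b, t^k * U.eval t = 0)
    (hS : S.natDegree ≤ m) :
    ∫ t in a..b, S.eval t * U.eval t = 0 := by
  have hev : (fun t : ℝ => S.eval t * U.eval t)
      = fun t => ∑ k ∈ Finset.range (m+1), S.coeff k * (t^k * U.eval t) := by
    funext t
    rw [Polynomial.eval_eq_sum_range' (Nat.lt_succ_of_le hS) t, Finset.sum_mul]
    exact Finset.sum_congr rfl (fun k _ => by ring)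
  rw [hev, intervalIntegral.integral_finset_sum
    (fun k _ => (iiPow k U a b).const_mul (S.coeff k))]
  apply Finset.sum_eq_zero
  intro k hk
  rw [intervalIntegral.integral_const_mul, h k (Nat.lt_succ_iff.mp (Finset.mem_range.mp hk))]
  ring

lemma core_lemma (n : ℕ) (hn : 1 ≤ n) (a b : ℝ) (hab : a < b) (F : Polynomial ℝ)
    (hdeg : F.natDegree ≤ n+1) (hFa : F.eval a = 0)
    (horth : ∀ k < n, ∫ t in a..b, t^k * F.eval t = 0) :
    ∫ t in a..b, t^n * F.eval t
      = ((∫ t in a..b, t^n * (psiP n a b).eval t) / (psiP n a b).coeff (n+1)) * F.coeff (n+1) := by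
  set ψ := psiP n a b with hψdef
  have hdψ : (0:ℝ) < ψ.coeff (n+1) := psi_coeff_pos n a b
  set c : ℝ := F.coeff (n+1) / ψ.coeff (n+1) with hcdef
  set R : Polynomial ℝ := F - C c * ψ with hRdef
  have hRdeg : R.natDegree ≤ n := by
    rw [Polynomial.natDegree_le_iff_coeff_eq_zero]
    intro m hm
    rw [hRdef, Polynomial.coeff_sub, Polynomial.coeff_C_mul]
    rcases eq_or_lt_of_le (Nat.succ_le_of_lt hm) with hm1 | hm1
    · rw [← hm1, hcdef, div_mul_cancel₀ _ hdψ.ne']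
      ring
    · rw [Polynomial.coeff_eq_zero_of_natDegree_lt (lt_of_le_of_lt hdeg hm1),
        Polynomial.coeff_eq_zero_of_natDegree_lt (lt_of_le_of_lt (psi_natDegree n a b) hm1)]
      ring
  have hRa : R.eval a = 0 := by
    rw [hRdef]; simp [hFa, hψdef, psi_eval_a n a b]
  have hRorth : ∀ k < n, ∫ t in a..b, t^k * R.eval t = 0 := by
    intro k hk
    rw [hRdef, int_monomial_sub, horth k hk, psi_orth n a b k hk]
    ring
  set L := LP n a b with hLdef
  have hL0 : L ≠ 0 := L_ne_zero n a b hab.ne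
  have hl : (0:ℝ) < ∫ t in a..b, L.eval t * L.eval t := sq_int_pos a b L hL0 hab
  set r : ℝ := (∫ t in a..b, L.eval t * R.eval t) / (∫ t in a..b, L.eval t * L.eval t)
    with hrdef
  set U : Polynomial ℝ := R - C r * L with hUdef
  have hUdeg : U.natDegree ≤ n := by
    refine le_trans (Polynomial.natDegree_sub_le _ _) (max_le hRdeg ?_)
    exact le_trans (Polynomial.natDegree_C_mul_le _ _) (L_natDegree n a b)
  have hUorth : ∀ k < n, ∫ t in a..b, t^k * U.eval t = 0 := by
    intro k hk
    rw [hUdef, int_monomial_sub, hRorth k hk, L_orth n a b k hk]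
    ring
  have hUL : ∫ t in a..b, L.eval t * U.eval t = 0 := by
    rw [hUdef, int_poly_sub, hrdef, div_mul_cancel₀ _ hl.ne']
    ring
  have hUn : ∫ t in a..b, t^n * U.eval t = 0 := by
    set Lc : ℝ := L.coeff n with hLcdef
    have hLc : (0:ℝ) < Lc := L_coeff_pos n a b
    set S : Polynomial ℝ := X^n - C (1/Lc) * L with hSdef
    have hSdeg : S.natDegree ≤ n - 1 := by
      rw [Polynomial.natDegree_le_iff_coeff_eq_zero]
      intro m hm
      have hmn : n ≤ m := by omega
      rw [hSdef, Polynomial.coeff_sub, Polynomial.coeff_C_mul, Polynomial.coeff_X_pow]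
      rcases eq_or_lt_of_le hmn with hm1 | hm1
      · rw [← hm1]
        simp [← hLcdef, one_div, inv_mul_cancel₀ hLc.ne']
      · rw [Polynomial.coeff_eq_zero_of_natDegree_lt (lt_of_le_of_lt (L_natDegree n a b) hm1)]
        simp [Nat.ne_of_gt hm1]
    have hXn : ∀ t : ℝ, t^n = S.eval t + (1/Lc) * L.eval t := by
      intro t; rw [hSdef]; simp
    have hint : (fun t : ℝ => t^n * U.eval t)
        = fun t => S.eval t * U.eval t + (1/Lc) * (L.eval t * U.eval t) := by
      funext t; rw [hXn t]; ring
    rw [hint, intervalIntegral.integral_add (polyII_s12 S U a b)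
      ((polyII_s12 L U a b).const_mul _), intervalIntegral.integral_const_mul, hUL,
      orth_of_lowdeg a b U S (n-1) (fun k hk => hUorth k (by omega)) hSdeg]
    ring
  have hUU : ∫ t in a..b, U.eval t * U.eval t = 0 := by
    apply orth_of_lowdeg a b U U n _ hUdeg
    intro k hk
    rcases eq_or_lt_of_le hk with h1 | h1
    · rw [h1]; exact hUn
    · exact hUorth k h1
  have hU0 : U = 0 := by
    by_contra h
    exact (sq_int_pos a b U h hab).ne' hUU
  have hRL : R = C r * L := by
    have := sub_eq_zero.mp (hUdef ▸ hU0)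
    exact this
  have hr0 : r = 0 := by
    have h1 : R.eval a = r * L.eval a := by rw [hRL]; simp
    rw [hRa] at h1
    rcases mul_eq_zero.mp h1.symm with h | h
    · exact h
    · exact absurd h (L_eval_a n a b hab.ne)
  have hFc : F = C c * ψ := by
    have : R = 0 := by rw [hRL, hr0]; simp
    rw [hRdef] at this
    exact sub_eq_zero.mp this
  have : ∫ t in a..b, t^n * F.eval t = c * ∫ t in a..b, t^n * ψ.eval t := by
    rw [hFc, ← intervalIntegral.integral_const_mul]
    apply intervalIntegral.integral_congr
    intro t _; simp; ring
  rw [this, hcdef]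
  ring
lemma finpoly_natDegree (q m : ℕ) (hqm : q ≤ m + 1) (c : Fin q → ℝ) :
    (∑ i : Fin q, C (c i) * X^(i:ℕ)).natDegree ≤ m := by
  apply Polynomial.natDegree_sum_le_of_forall_le
  intro i _
  refine le_trans (Polynomial.natDegree_C_mul_le _ _) ?_
  rw [Polynomial.natDegree_X_pow]
  have := i.2
  omega

lemma finpoly_coeff (q : ℕ) (c : Fin q → ℝ) (m : ℕ) (hm : m < q) :
    (∑ i : Fin q, C (c i) * X^(i:ℕ)).coeff m = c ⟨m, hm⟩ := by
  rw [Polynomial.finset_sum_coeff]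
  rw [Finset.sum_eq_single (⟨m, hm⟩ : Fin q)]
  · simp
  · intro i _ hne
    have h2 : m ≠ (i:ℕ) := by
      intro h; exact hne (Fin.ext h.symm)
    simp [Polynomial.coeff_X_pow, h2]
  · intro h; exact absurd (Finset.mem_univ _) h


end ThomeeAux


/-- An `H`-valued polynomial of degree at most `n - 1` (i.e. with `n` coefficients);
for `n = 0` only the zero polynomial qualifies. -/
def IsPolyDegLT (H : Type*) [AddCommGroup H] [Module ℝ H] (n : ℕ) (f : ℝ → H) : Prop :=
  ∃ c : Fin n → H, ∀ t : ℝ, f t = ∑ i : Fin n, t ^ (i : ℕ) • c i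

set_option maxHeartbeats 1000000 in
/-- **Bound involving the left-sided Thomée projection of degree `q − 1`.**
Let `q ≥ 2`, `φ(t) = 1 − λ(t − a)` with `λ = 1/(2τ)`, let `w` be a polynomial of degree at
most `q − 1`, and let `g` (degree at most `q − 1`) be the left-sided Thomée projection of
`φ w`, i.e. `g(a) = w(a)` and `φ w − g` is `L²`-orthogonal to polynomials of degree at most
`q − 2`. Then `∫_a^b ⟨w(t), φ(t) w(t) − g(t)⟩ dt ≤ 0`. -/
theorem bound_left_thomee_varphi (H : Type*) [NormedAddCommGroup H] [InnerProductSpace ℝ H]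
    [CompleteSpace H] (q : ℕ) (hq : 2 ≤ q) (a b τ lam : ℝ) (hab : a < b) (hτ : τ = b - a)
    (hlam : lam = 1 / (2 * τ)) (φ : ℝ → ℝ) (hφ : ∀ t, φ t = 1 - lam * (t - a))
    (w g : ℝ → H) (hw : IsPolyDegLT H q w) (hg : IsPolyDegLT H q g)
    (hga : g a = w a)
    (horth : ∀ p : ℝ → H, IsPolyDegLT H (q - 1) p →
      (∫ t in a..b, ⟪φ t • w t - g t, p t⟫) = 0) :
    (∫ t in a..b, ⟪w t, φ t • w t - g t⟫) ≤ 0 := by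
  obtain ⟨wc, hwc⟩ := hw
  obtain ⟨gc, hgc⟩ := hg
  set n : ℕ := q - 1 with hndef
  have hn : 1 ≤ n := by omega
  have hqn : q = n + 1 := by omega
  have hlampos : 0 < lam := by
    have hba : 0 < b - a := by linarith
    rw [hlam, hτ]; positivity
  -- the scalar polynomial F v with eval t = ⟪φ t • w t - g t, v⟫
  set Fp : H → Polynomial ℝ := fun v =>
    (C 1 - C lam * (X - C a)) * (∑ i : Fin q, C ⟪wc i, v⟫ * X^(i:ℕ))
      - ∑ i : Fin q, C ⟪gc i, v⟫ * X^(i:ℕ) with hFpdef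
  have hFeval : ∀ (v : H) (t : ℝ), (Fp v).eval t = ⟪φ t • w t - g t, v⟫ := by
    intro v t
    rw [hFpdef]
    simp only [Polynomial.eval_sub, Polynomial.eval_mul, Polynomial.eval_one,
      Polynomial.eval_finset_sum, Polynomial.eval_C, Polynomial.eval_X, Polynomial.eval_pow,
      hφ, hwc, hgc, inner_sub_left, sum_inner, real_inner_smul_left]
    simp [mul_comm]
  have hFdeg : ∀ v : H, (Fp v).natDegree ≤ n + 1 := by
    intro v
    rw [hFpdef]
    refine le_trans (Polynomial.natDegree_sub_le _ _) (max_le ?_ ?_)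
    · refine le_trans (Polynomial.natDegree_mul_le) ?_
      have h1 : (C 1 - C lam * ((X:Polynomial ℝ) - C a)).natDegree ≤ 1 := by
        refine le_trans (Polynomial.natDegree_sub_le _ _) (max_le (by simp) ?_)
        refine le_trans (Polynomial.natDegree_mul_le) ?_
        simp [Polynomial.natDegree_X_sub_C]
      have h2 := finpoly_natDegree q n (by omega) (fun i => ⟪wc i, v⟫)
      omega
    · exact le_trans (finpoly_natDegree q n (by omega) _) (by omega)
  have hFcoeff : ∀ v : H, (Fp v).coeff (n+1) = -lam * ⟪wc ⟨n, by omega⟩, v⟫ := by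
    intro v
    have hA : (C 1 - C lam * ((X:Polynomial ℝ) - C a))
        = C (1 + lam * a) + C (-lam) * X := by
      rw [Polynomial.C_add, Polynomial.C_mul, Polynomial.C_neg, Polynomial.C_1]
      ring
    have hWz : (∑ i : Fin q, C ⟪wc i, v⟫ * X^(i:ℕ)).coeff (n+1) = 0 :=
      Polynomial.coeff_eq_zero_of_natDegree_lt
        (lt_of_le_of_lt (finpoly_natDegree q n (by omega) _) (by omega))
    have hGz : (∑ i : Fin q, C ⟪gc i, v⟫ * X^(i:ℕ)).coeff (n+1) = 0 :=
      Polynomial.coeff_eq_zero_of_natDegree_lt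
        (lt_of_le_of_lt (finpoly_natDegree q n (by omega) _) (by omega))
    have hWn : (∑ i : Fin q, C ⟪wc i, v⟫ * X^(i:ℕ)).coeff n = ⟪wc ⟨n, by omega⟩, v⟫ :=
      finpoly_coeff q _ n (by omega)
    rw [hFpdef]
    simp only [hA]
    rw [Polynomial.coeff_sub, add_mul, mul_assoc, Polynomial.coeff_add,
      Polynomial.coeff_C_mul, Polynomial.coeff_C_mul, Polynomial.coeff_X_mul,
      hWz, hGz, hWn]
    ring
  -- eval at a vanishes
  have hFa : ∀ v : H, (Fp v).eval a = 0 := by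
    intro v
    rw [hFeval]
    have : φ a = 1 := by rw [hφ]; ring
    rw [this, one_smul, hga, sub_self, inner_zero_left]
  -- orthogonality of Fp v to low monomials
  have hForth : ∀ (v : H) (k : ℕ), k < n → ∫ t in a..b, t^k * (Fp v).eval t = 0 := by
    intro v k hk
    have hp : IsPolyDegLT H (q - 1) (fun t : ℝ => t^k • v) := by
      refine ⟨fun j => if (j:ℕ) = k then v else 0, fun t => ?_⟩
      rw [Finset.sum_eq_single (⟨k, by omega⟩ : Fin (q-1))]
      · simp
      · intro i _ hne
        have h2 : (i:ℕ) ≠ k := by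
          intro h; exact hne (Fin.ext (by simpa using h))
        simp [h2]
      · intro h; exact absurd (Finset.mem_univ _) h
    have h0 := horth _ hp
    rw [← h0]
    apply intervalIntegral.integral_congr
    intro t _
    show t ^ k * (Fp v).eval t = ⟪φ t • w t - g t, t ^ k • v⟫
    rw [hFeval, real_inner_smul_right]
  -- the last coefficient of w
  set vlast : H := wc ⟨n, by omega⟩ with hvlast
  -- rewrite the goal integrand
  have hgoal : (fun t : ℝ => (⟪w t, φ t • w t - g t⟫ : ℝ))
      = fun t => ∑ i : Fin q, t^(i:ℕ) * (Fp (wc i)).eval t := by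
    funext t
    have h1 : ∀ y : H, (⟪w t, y⟫ : ℝ) = ∑ i : Fin q, t^(i:ℕ) * ⟪y, wc i⟫ := by
      intro y
      rw [hwc t, sum_inner]
      exact Finset.sum_congr rfl (fun i _ => by rw [real_inner_smul_left, real_inner_comm])
    rw [h1]
    exact Finset.sum_congr rfl (fun i _ => by rw [hFeval])
  rw [hgoal]
  rw [intervalIntegral.integral_finset_sum (μ := volume) (a := a) (b := b)
    (f := fun (i : Fin q) (t : ℝ) => t^(i:ℕ) * (Fp (wc i)).eval t)
    (fun i _ => iiPow i.1 (Fp (wc i)) a b)]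
  apply Finset.sum_nonpos
  intro i _
  by_cases hi : (i : ℕ) < n
  · rw [hForth (wc i) i.1 hi]
  · have hieq : (i:ℕ) = n := by have := i.2; omega
    have hlast : wc i = vlast := by rw [hvlast]; congr 1; exact Fin.ext hieq
    calc ∫ t in a..b, t^(i:ℕ) * (Fp (wc i)).eval t
        = ∫ t in a..b, t^n * (Fp vlast).eval t := by rw [hieq, hlast]
      _ = ((∫ t in a..b, t^n * (psiP n a b).eval t) / (psiP n a b).coeff (n+1))
            * ((Fp vlast).coeff (n+1)) :=
          core_lemma n hn a b hab (Fp vlast) (hFdeg vlast) (hFa vlast)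
            (fun k hk => hForth vlast k hk)
      _ ≤ 0 := by
          rw [hFcoeff vlast]
          have hC : 0 ≤ (∫ t in a..b, t^n * (psiP n a b).eval t) / (psiP n a b).coeff (n+1) :=
            div_nonneg (psi_int_nonneg n a b hab.le) (psi_coeff_pos n a b).le
          have hinner : (0:ℝ) ≤ (⟪vlast, vlast⟫ : ℝ) := real_inner_self_nonneg
          have h2 : -lam * (⟪vlast, vlast⟫ : ℝ) ≤ 0 := by nlinarith
          exact mul_nonpos_of_nonneg_of_nonpos hC h2
end

section
/- Let q ≥ 1 be an integer and let a < b. Let L_{q−1} and L_q be real polynomials of degrees exactly q − 1 and q, respectively, satisfying L_{q−1}(a) = (−1)^{q−1}, L_q(a) = (−1)^q, ∫_a^b L_{q−1}(t) m(t) dt = 0name for every real polynomial m of degree at most q − 2, and ∫_a^b L_q(t) m(t) dt = 0 for every real polynomial m of degree at most q − 1. If g is a real polynomial of degree at most q − 1 with g(a) = L_q(a) and ∫_a^b (L_q(t) − g(t)) m(t) dt = 0 for every real polynomial m of degree at most q − 2, then g = −L_{q−1}. -/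
open MeasureTheory Set

/-- A real polynomial of degree at most `n - 1` (i.e. with `n` coefficients);
for `n = 0` only the zero polynomial qualifies. -/
def RealPolyDegLT (n : ℕ) (f : ℝ → ℝ) : Prop :=
  ∃ c : Fin n → ℝ, ∀ t : ℝ, f t = ∑ i : Fin n, c i * t ^ (i : ℕ)

/-- A real polynomial of degree exactly `n`: `n + 1` coefficients with a nonzero
leading coefficient. -/
def RealPolyDegEq (n : ℕ) (f : ℝ → ℝ) : Prop :=
  ∃ c : Fin (n + 1) → ℝ, c (Fin.last n) ≠ 0 ∧ ∀ t : ℝ, f t = ∑ i : Fin (n + 1), c i * t ^ (i : ℕ)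

open Polynomial in
lemma realPolyDegLT_exists {n : ℕ} {f : ℝ → ℝ} (h : RealPolyDegLT n f) :
    ∃ P : Polynomial ℝ, P.degree < (n : ℕ) ∧ ∀ t, f t = P.eval t := by
  obtain ⟨c, hc⟩ := h
  refine ⟨∑ i : Fin n, C (c i) * X ^ (i : ℕ), ?_, ?_⟩
  · refine lt_of_le_of_lt (degree_sum_le _ _) ?_
    rw [Finset.sup_lt_iff (by exact_mod_cast WithBot.bot_lt_coe n)]
    intro i _
    exact lt_of_le_of_lt (degree_C_mul_X_pow_le _ _) (by exact_mod_cast i.isLt)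
  · intro t
    simp [hc t, eval_finset_sum]

open Polynomial in
lemma realPolyDegLT_of_natDegree_lt {n : ℕ} {P : Polynomial ℝ} (h : P.natDegree < n) :
    RealPolyDegLT n (fun t => P.eval t) := by
  refine ⟨fun i => P.coeff i, fun t => ?_⟩
  rw [Fin.sum_univ_eq_sum_range (fun i => P.coeff i * t ^ i) n]
  exact P.eval_eq_sum_range' h t

lemma realPolyDegLT_of_eq {n : ℕ} {f : ℝ → ℝ} (h : RealPolyDegEq n f) :
    RealPolyDegLT (n + 1) f := by
  obtain ⟨c, _, hc⟩ := h; exact ⟨c, hc⟩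

lemma RealPolyDegLT.continuous {n : ℕ} {f : ℝ → ℝ} (h : RealPolyDegLT n f) : Continuous f := by
  obtain ⟨c, hc⟩ := h
  have : f = fun t => ∑ i : Fin n, c i * t ^ (i : ℕ) := funext hc
  rw [this]
  exact continuous_finset_sum _ fun i _ => (continuous_const.mul (continuous_pow _))

/-- **The left-sided Thomée projection of degree `q − 1` maps `L_q` to `−L_{q−1}`.**
Here `L_{q−1}` and `L_q` are the Legendre polynomials rescaled to `(a,b)`, characterized by
their degrees, their left-endpoint values `(−1)^{q−1}` and `(−1)^q`, and their
`L²((a,b))`-orthogonality to all polynomials of strictly lower degree. If `g` has degree at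
most `q − 1`, `g(a) = L_q(a)`, and `L_q − g` is `L²`-orthogonal to polynomials of degree at
most `q − 2`, then `g = −L_{q−1}`. -/
theorem left_thomee_legendre (q : ℕ) (hq : 1 ≤ q) (a b : ℝ) (hab : a < b)
    (Lqm1 Lq g : ℝ → ℝ)
    (hLqm1deg : RealPolyDegEq (q - 1) Lqm1) (hLqdeg : RealPolyDegEq q Lq)
    (hLqm1a : Lqm1 a = (-1 : ℝ) ^ (q - 1)) (hLqa : Lq a = (-1 : ℝ) ^ q)
    (hLqm1orth : ∀ m : ℝ → ℝ, RealPolyDegLT (q - 1) m → (∫ t in a..b, Lqm1 t * m t) = 0)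
    (hLqorth : ∀ m : ℝ → ℝ, RealPolyDegLT q m → (∫ t in a..b, Lq t * m t) = 0)
    (hgdeg : RealPolyDegLT q g) (hga : g a = Lq a)
    (hgorth : ∀ m : ℝ → ℝ, RealPolyDegLT (q - 1) m →
      (∫ t in a..b, (Lq t - g t) * m t) = 0) :
    ∀ t : ℝ, g t = -Lqm1 t := by
  classical
  obtain ⟨PG, hPGdeg, hPG⟩ := realPolyDegLT_exists hgdeg
  have hLqm1lt : RealPolyDegLT q Lqm1 := by
    have := realPolyDegLT_of_eq hLqm1deg
    rwa [Nat.sub_add_cancel hq] at this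
  obtain ⟨PL, hPLdeg, hPL⟩ := realPolyDegLT_exists hLqm1lt
  set H : Polynomial ℝ := PG + PL with hH
  have hHdeg : H.degree < (q : ℕ) := lt_of_le_of_lt (Polynomial.degree_add_le _ _)
    (max_lt hPGdeg hPLdeg)
  have hHeval : ∀ t, H.eval t = g t + Lqm1 t := by
    intro t; simp [hH, ← hPG, ← hPL]
  have hHa : H.eval a = 0 := by
    obtain ⟨n, rfl⟩ : ∃ n, q = n + 1 := ⟨q - 1, (Nat.sub_add_cancel hq).symm⟩
    rw [hHeval, hga, hLqa, hLqm1a]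
    simp [pow_succ]
  -- continuity of the given functions
  have hLqcont : Continuous Lq := (realPolyDegLT_of_eq hLqdeg).continuous
  have hgcont : Continuous g := hgdeg.continuous
  have hLqm1cont : Continuous Lqm1 := hLqm1lt.continuous
  -- main claim : H = 0
  have hH0 : H = 0 := by
    by_contra hH0
    obtain ⟨P, hPfac⟩ := (Polynomial.dvd_iff_isRoot.mpr hHa)
    have hP0 : P ≠ 0 := by rintro rfl; simp at hPfac; exact hH0 hPfac
    have hndH : H.natDegree < q := (Polynomial.natDegree_lt_iff_degree_lt hH0).mpr hHdeg
    have hnd : H.natDegree = 1 + P.natDegree := by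
      rw [hPfac, Polynomial.natDegree_mul (Polynomial.X_sub_C_ne_zero a) hP0,
        Polynomial.natDegree_X_sub_C]
    have hPlt : P.natDegree < q - 1 := by omega
    set m : ℝ → ℝ := fun t => P.eval t with hm
    have hmLT : RealPolyDegLT (q - 1) m := realPolyDegLT_of_natDegree_lt hPlt
    have hmLTq : RealPolyDegLT q m := realPolyDegLT_of_natDegree_lt (by omega)
    have hmcont : Continuous m := hmLT.continuous
    -- integral of H * m is zero
    have i1 : (∫ t in a..b, Lqm1 t * m t) = 0 := hLqm1orth m hmLT
    have i2 : (∫ t in a..b, Lq t * m t) = 0 := hLqorth m hmLTq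
    have i3 : (∫ t in a..b, (Lq t - g t) * m t) = 0 := hgorth m hmLT
    have key : (∫ t in a..b, H.eval t * m t) = 0 := by
      have e : ∀ t, H.eval t * m t =
          Lqm1 t * m t + Lq t * m t - (Lq t - g t) * m t := by
        intro t; rw [hHeval]; ring
      have int1 : IntervalIntegrable (fun t => Lqm1 t * m t) volume a b :=
        (hLqm1cont.mul hmcont).intervalIntegrable a b
      have int2 : IntervalIntegrable (fun t => Lq t * m t) volume a b :=
        (hLqcont.mul hmcont).intervalIntegrable a b
      have int3 : IntervalIntegrable (fun t => (Lq t - g t) * m t) volume a b :=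
        (((hLqcont.sub hgcont)).mul hmcont).intervalIntegrable a b
      calc (∫ t in a..b, H.eval t * m t)
          = ∫ t in a..b, (Lqm1 t * m t + Lq t * m t - (Lq t - g t) * m t) := by
            simp_rw [e]
        _ = (∫ t in a..b, (Lqm1 t * m t + Lq t * m t)) -
              ∫ t in a..b, (Lq t - g t) * m t :=
            intervalIntegral.integral_sub (int1.add int2) int3
        _ = 0 := by
            rw [intervalIntegral.integral_add int1 int2, i1, i2, i3]; ring
    -- but the integral is positive
    have hpos : 0 < ∫ t in a..b, H.eval t * m t := by
      have erw : ∀ t, H.eval t * m t = (t - a) * (P.eval t) ^ 2 := by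
        intro t; rw [hPfac]; simp [hm]; ring
      simp_rw [erw]
      obtain ⟨c, hcIoo, hcP⟩ : ∃ c ∈ Ioo a b, P.eval c ≠ 0 := by
        have hfin : {x : ℝ | P.IsRoot x}.Finite := Polynomial.finite_setOf_isRoot hP0
        obtain ⟨c, hc⟩ := ((Set.Ioo_infinite hab).diff hfin).nonempty
        exact ⟨c, hc.1, hc.2⟩
      refine intervalIntegral.integral_pos hab ?_ ?_ ⟨c, Ioo_subset_Icc_self hcIoo, ?_⟩
      · exact (Continuous.continuousOn (by continuity))
      · intro x hx
        have : 0 ≤ x - a := by linarith [hx.1]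
        positivity
      · have h1 : 0 < c - a := by linarith [hcIoo.1]
        positivity
    exact absurd key (ne_of_gt hpos)
  intro t
  have := hHeval t
  rw [hH0] at this
  simp at this
  linarith
end

section
/- Let q ≥ 2 and s be integers with 2 ≤ s ≤ q + 1, let C_Q > 0, and let H be a real Hilbert space. There exists a constant C > 0, depending only on q, s, and C_Q, with the following property: for all a < b with τ = b − a, all r ∈ [1,∞], every linear operator Q from C([a,b];H) into the space of restrictions to [a,b] of H-valued polynomials of degree at most q − 1 satisfying (i) Qp = p on [a,b] for every H-valued polynomial p of degree at most q − 1 and (ii) ‖Qg‖_{L^∞((a,b);H)} ≤ C_Q ‖g‖_{L^∞((a,b);H)} for every g ∈ C([a,b];H), and every s-times continuously differentiable v : [a,b] → H, the function Pv(t) := v(a) + ∫_a^t (Qv')(σ) dσ satisfies ‖v − Pv‖_{L^r((a,b);H)} ≤ C τ^s ‖v^{(s)}‖_{L^r((a,b);H)} and ‖v' − (Pv)'‖_{L^r((a,b);H)} ≤ C τ^{s−1} ‖v^{(s)}‖_{L^r((a,b);H)}. -/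
open MeasureTheory Set ENNReal
open scoped Nat

lemma isPolyDegLT_shift (H : Type*) [AddCommGroup H] [Module ℝ H] (q m : ℕ) (hm : m ≤ q)
    (a : ℝ) (c : Fin m → H) :
    IsPolyDegLT H q (fun x => ∑ i : Fin m, (x - a) ^ (i : ℕ) • c i) := by
  refine ⟨fun j => ∑ i : Fin m,
    ((((i : ℕ).choose (j : ℕ) : ℝ)) * (-a) ^ ((i : ℕ) - (j : ℕ))) • c i, fun t => ?_⟩
  simp only [Finset.smul_sum, smul_smul]
  rw [Finset.sum_comm]
  refine Finset.sum_congr rfl fun i _ => ?_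
  rw [← Finset.sum_smul]
  congr 1
  have hiq : (i : ℕ) + 1 ≤ q := le_trans i.2 hm
  have key : ∑ j : Fin q, t ^ (j : ℕ) * ((((i : ℕ).choose (j : ℕ) : ℝ)) *
      (-a) ^ ((i : ℕ) - (j : ℕ))) =
      ∑ j ∈ Finset.range ((i : ℕ) + 1), t ^ j * (((i : ℕ).choose j : ℝ) * (-a) ^ ((i : ℕ) - j)) := by
    rw [Fin.sum_univ_eq_sum_range (fun j => t ^ j * (((i : ℕ).choose j : ℝ) * (-a) ^ ((i:ℕ) - j)))]
    refine (Finset.sum_subset (Finset.range_subset_range.2 hiq) fun j _ hj => ?_).symm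
    simp only [Finset.mem_range, not_lt] at hj
    rw [Nat.choose_eq_zero_of_lt hj]
    simp
  rw [key]
  have h := add_pow t (-a) (i : ℕ)
  rw [show t - a = t + (-a) by ring, h]
  refine Finset.sum_congr rfl fun j _ => by ring

lemma IsPolyDegLT.continuous {H : Type*} [NormedAddCommGroup H] [NormedSpace ℝ H] {q : ℕ}
    {f : ℝ → H} (hf : IsPolyDegLT H q f) : Continuous f := by
  obtain ⟨c, hc⟩ := hf
  have : f = fun t => ∑ i : Fin q, t ^ (i : ℕ) • c i := funext hc
  rw [this]
  exact continuous_finset_sum _ fun i _ => (continuous_pow _).smul continuous_const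

lemma taylor_remainder_L1_bound {H : Type*} [NormedAddCommGroup H] [NormedSpace ℝ H]
    [CompleteSpace H] {a b : ℝ} (hab : a < b) {n : ℕ} {w : ℝ → H}
    (hw : ContDiffOn ℝ (n + 1) w (Icc a b)) {x : ℝ} (hx : x ∈ Icc a b) :
    ‖w x - taylorWithinEval w n (Icc a b) a x‖ ≤
      ((b - a) ^ n / n !) * ∫ t in a..b, ‖iteratedDerivWithin (n + 1) w (Icc a b) t‖ := by
  set W := iteratedDerivWithin (n + 1) w (Icc a b) with hW
  have hUD : UniqueDiffOn ℝ (Icc a b) := uniqueDiffOn_Icc hab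
  have hWcont : ContinuousOn W (Icc a b) :=
    hw.continuousOn_iteratedDerivWithin (by exact_mod_cast le_refl _) hUD
  have hax : a ≤ x := hx.1
  have hsub : Icc a x ⊆ Icc a b := Icc_subset_Icc_right hx.2
  set g : ℝ → H := fun t => taylorWithinEval w n (Icc a b) t x with hg
  set g' : ℝ → H := fun t => (((n ! : ℝ))⁻¹ * (x - t) ^ n) • W t with hg'
  have hgcont : ContinuousOn g (Icc a x) :=
    (continuousOn_taylorWithinEval hUD hw.of_succ).mono hsub
  have hg'cont : ContinuousOn g' (Icc a b) :=
    (continuousOn_const.mul ((continuousOn_const.sub continuousOn_id).pow _)).smul hWcont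
  have hderiv : ∀ t ∈ Ioo a x, HasDerivWithinAt g (g' t) (Ioi t) t := by
    intro t ht
    have ht' : t ∈ Ioo a b := ⟨ht.1, lt_of_lt_of_le ht.2 hx.2⟩
    have hdiff : DifferentiableOn ℝ (iteratedDerivWithin n w (Icc a b)) (Ioo a b) :=
      (hw.differentiableOn_iteratedDerivWithin (by exact_mod_cast Nat.lt_succ_self n) hUD).mono
        Ioo_subset_Icc_self
    exact (taylorWithinEval_hasDerivAt_Ioo x hab ht' hw.of_succ hdiff).hasDerivWithinAt
  have hint : IntervalIntegrable g' volume a x :=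
    (hg'cont.mono (by rw [uIcc_of_le hax]; exact hsub)).intervalIntegrable
  have hFTC : ∫ t in a..x, g' t = g x - g a :=
    intervalIntegral.integral_eq_sub_of_hasDeriv_right_of_le hax hgcont hderiv hint
  have hgx : g x = w x := taylorWithinEval_self w n (Icc a b) x
  have heq : w x - taylorWithinEval w n (Icc a b) a x = ∫ t in a..x, g' t := by
    rw [hFTC, hgx]
  rw [heq]
  calc ‖∫ t in a..x, g' t‖ ≤ ∫ t in a..x, ‖g' t‖ :=
        intervalIntegral.norm_integral_le_integral_norm hax
    _ ≤ ∫ t in a..x, ((b - a) ^ n / n !) * ‖W t‖ := by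
        refine intervalIntegral.integral_mono_on hax
          ((hg'cont.mono (by rw [uIcc_of_le hax]; exact hsub)).norm.intervalIntegrable)
          ((continuousOn_const.mul
            ((hWcont.mono (by rw [uIcc_of_le hax]; exact hsub)).norm)).intervalIntegrable)
          fun t ht => ?_
        rw [mem_Icc] at ht
        rw [hg', norm_smul]
        gcongr
        rw [norm_mul, norm_inv, Real.norm_natCast, norm_pow, Real.norm_eq_abs,
          abs_of_nonneg (by linarith [ht.2] : (0:ℝ) ≤ x - t)]
        rw [div_eq_mul_inv, mul_comm]
        gcongr <;> linarith [ht.1, ht.2, hx.1, hx.2]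
    _ ≤ ∫ t in a..b, ((b - a) ^ n / n !) * ‖W t‖ := by
        apply intervalIntegral.integral_mono_interval (le_refl a) hax hx.2
        · filter_upwards with t
          exact mul_nonneg (div_nonneg (pow_nonneg (by linarith) _) (by positivity)) (norm_nonneg _)
        · exact ContinuousOn.intervalIntegrable
            (by rw [uIcc_of_le hab.le]; exact continuousOn_const.mul hWcont.norm)
    _ = ((b - a) ^ n / n !) * ∫ t in a..b, ‖W t‖ := by
        rw [intervalIntegral.integral_const_mul]

lemma key_combine {H : Type*} [NormedAddCommGroup H] {a b : ℝ} (hab : a < b)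
    {r : ℝ≥0∞} (hr : 1 ≤ r) {E D : ℝ → H}
    (hE : AEStronglyMeasurable E (volume.restrict (Ioo a b)))
    (hD : AEStronglyMeasurable D (volume.restrict (Ioo a b)))
    {M : ℝ} (hM : 0 ≤ M)
    (hbound : eLpNorm E ⊤ (volume.restrict (Ioo a b)) ≤
      ENNReal.ofReal M * eLpNorm D 1 (volume.restrict (Ioo a b))) :
    eLpNorm E r (volume.restrict (Ioo a b)) ≤
      ENNReal.ofReal (M * (b - a)) * eLpNorm D r (volume.restrict (Ioo a b)) := by
  set μ := volume.restrict (Ioo a b) with hμdef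
  have hT0 : ENNReal.ofReal (b - a) ≠ 0 := by
    simp only [ne_eq, ENNReal.ofReal_eq_zero, not_le]; linarith
  have hTtop : ENNReal.ofReal (b - a) ≠ ⊤ := ENNReal.ofReal_ne_top
  have hμu : μ Set.univ = ENNReal.ofReal (b - a) := by
    rw [hμdef, Measure.restrict_apply_univ, Real.volume_Ioo]
  have h1 := eLpNorm_le_eLpNorm_mul_rpow_measure_univ (p := r) (q := ⊤) le_top hE (μ := μ)
  have h2 := eLpNorm_le_eLpNorm_mul_rpow_measure_univ (p := 1) (q := r) hr hD (μ := μ)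
  rw [hμu] at h1 h2
  have hsum : ENNReal.ofReal (b - a) ^ (1 / (1 : ℝ≥0∞).toReal - 1 / r.toReal) *
      ENNReal.ofReal (b - a) ^ (1 / r.toReal - 1 / (⊤ : ℝ≥0∞).toReal) =
      ENNReal.ofReal (b - a) := by
    rw [← ENNReal.rpow_add _ _ hT0 hTtop]
    norm_num
  calc eLpNorm E r μ
      ≤ eLpNorm E ⊤ μ * ENNReal.ofReal (b - a) ^ (1 / r.toReal - 1 / (⊤ : ℝ≥0∞).toReal) := h1
    _ ≤ (ENNReal.ofReal M * eLpNorm D 1 μ) *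
        ENNReal.ofReal (b - a) ^ (1 / r.toReal - 1 / (⊤ : ℝ≥0∞).toReal) := by gcongr
    _ ≤ (ENNReal.ofReal M * (eLpNorm D r μ *
        ENNReal.ofReal (b - a) ^ (1 / (1 : ℝ≥0∞).toReal - 1 / r.toReal))) *
        ENNReal.ofReal (b - a) ^ (1 / r.toReal - 1 / (⊤ : ℝ≥0∞).toReal) := by gcongr
    _ = ENNReal.ofReal (M * (b - a)) * eLpNorm D r μ := by
        rw [mul_assoc, mul_assoc, hsum, ENNReal.ofReal_mul hM]
        ring

/-- **Estimates for the Walkington projection.** Let `2 ≤ s ≤ q + 1`. There exists `C > 0`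
depending only on `q`, `s`, `C_Q` such that: for every interval `(a,b)` with `τ = b − a`,
every `r ∈ [1,∞]`, every linear operator `Q` into polynomials of degree at most `q − 1` that
reproduces such polynomials on `[a,b]` and is `L^∞`-stable with constant `C_Q`, and every
`s`-times continuously differentiable `v`, the Walkington projection
`Pv(t) = v(a) + ∫_a^t (Qv')(σ) dσ` satisfies
`‖v − Pv‖_{L^r((a,b);H)} ≤ C τ^s ‖v^{(s)}‖_{L^r((a,b);H)}` and
`‖v' − (Pv)'‖_{L^r((a,b);H)} ≤ C τ^{s−1} ‖v^{(s)}‖_{L^r((a,b);H)}`. -/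
theorem walkington_projection_estimates (q s : ℕ) (hq : 2 ≤ q) (hs1 : 2 ≤ s)
    (hs2 : s ≤ q + 1) (C_Q : ℝ) (hCQ : 0 < C_Q)
    (H : Type*) [NormedAddCommGroup H] [InnerProductSpace ℝ H] [CompleteSpace H] :
    ∃ C : ℝ, 0 < C ∧
      ∀ (a b τ : ℝ), a < b → τ = b - a →
        ∀ r : ℝ≥0∞, 1 ≤ r →
          ∀ Q : (ℝ → H) → (ℝ → H),
            (∀ f g : ℝ → H, ContinuousOn f (Icc a b) → ContinuousOn g (Icc a b) →
              ∀ u ∈ Icc a b, Q (f + g) u = Q f u + Q g u) →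
            (∀ (c : ℝ) (f : ℝ → H), ContinuousOn f (Icc a b) →
              ∀ u ∈ Icc a b, Q (c • f) u = c • Q f u) →
            (∀ f : ℝ → H, ContinuousOn f (Icc a b) →
              ∃ pf : ℝ → H, IsPolyDegLT H q pf ∧ ∀ u ∈ Icc a b, Q f u = pf u) →
            (∀ pf : ℝ → H, IsPolyDegLT H q pf → ∀ u ∈ Icc a b, Q pf u = pf u) →
            (∀ g : ℝ → H, ContinuousOn g (Icc a b) →
              eLpNorm (Q g) ⊤ (volume.restrict (Ioo a b)) ≤
                ENNReal.ofReal C_Q * eLpNorm g ⊤ (volume.restrict (Ioo a b))) →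
            ∀ v : ℝ → H, ContDiffOn ℝ s v (Icc a b) →
              eLpNorm
                  (fun u => v u - (v a + ∫ σ in a..u, Q (derivWithin v (Icc a b)) σ)) r
                  (volume.restrict (Ioo a b)) ≤
                ENNReal.ofReal (C * τ ^ s) *
                  eLpNorm (iteratedDerivWithin s v (Icc a b)) r (volume.restrict (Ioo a b))
              ∧ eLpNorm
                  (fun u => derivWithin v (Icc a b) u -
                    deriv (fun x => v a + ∫ σ in a..x, Q (derivWithin v (Icc a b)) σ) u) r
                  (volume.restrict (Ioo a b)) ≤
                ENNReal.ofReal (C * τ ^ (s - 1)) *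
                  eLpNorm (iteratedDerivWithin s v (Icc a b)) r (volume.restrict (Ioo a b)) := by
  obtain ⟨n, rfl⟩ : ∃ n, s = n + 2 := ⟨s - 2, by omega⟩
  refine ⟨(1 + C_Q) / n !, by positivity, ?_⟩
  intro a b τ hab hτ r hr Q hQadd hQsmul hQrange hQpoly hQbound v hv
  subst hτ
  set μ := volume.restrict (Ioo a b) with hμdef
  have hba : (0:ℝ) ≤ b - a := by linarith
  have hUD : UniqueDiffOn ℝ (Icc a b) := uniqueDiffOn_Icc hab
  set w := derivWithin v (Icc a b) with hwdef
  have hwC : ContDiffOn ℝ (n + 1) w (Icc a b) := by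
    refine hv.derivWithin hUD ?_
    exact_mod_cast le_refl (n + 2)
  have hwcont : ContinuousOn w (Icc a b) := hwC.continuousOn
  set Ds := iteratedDerivWithin (n + 2) v (Icc a b) with hDsdef
  have hDseq : ∀ x ∈ Icc a b, iteratedDerivWithin (n + 1) w (Icc a b) x = Ds x := by
    intro x hx
    rw [hDsdef, hwdef]
    exact (congrFun iteratedDerivWithin_succ' x).symm
  have hDscont : ContinuousOn Ds (Icc a b) :=
    hv.continuousOn_iteratedDerivWithin (by exact_mod_cast le_refl (n + 2)) hUD
  have hDsmeas : AEStronglyMeasurable Ds μ :=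
    (hDscont.mono Ioo_subset_Icc_self).aestronglyMeasurable measurableSet_Ioo
  set K := ∫ t in a..b, ‖Ds t‖ with hKdef
  have hK0 : 0 ≤ K :=
    intervalIntegral.integral_nonneg hab.le (fun _ _ => norm_nonneg _)
  set p : ℝ → H := fun x => taylorWithinEval w n (Icc a b) a x with hpdef
  -- remainder bound
  have hrem : ∀ x ∈ Icc a b, ‖w x - p x‖ ≤ (b - a) ^ n / n ! * K := by
    intro x hx
    have h := taylor_remainder_L1_bound hab hwC hx
    have hcongr : (∫ t in a..b, ‖iteratedDerivWithin (n + 1) w (Icc a b) t‖) = K := by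
      refine intervalIntegral.integral_congr fun t ht => ?_
      rw [uIcc_of_le hab.le] at ht
      rw [hDseq t ht]
    rwa [hcongr] at h
  -- p is a polynomial of admissible degree
  have hppoly : IsPolyDegLT H q p := by
    have h := isPolyDegLT_shift H q (n + 1) (by omega) a
      (fun i => (((i : ℕ)! : ℝ))⁻¹ • iteratedDerivWithin (i : ℕ) w (Icc a b) a)
    have hpe : p = fun x => ∑ i : Fin (n + 1), (x - a) ^ (i : ℕ) •
        ((((i : ℕ)! : ℝ))⁻¹ • iteratedDerivWithin (i : ℕ) w (Icc a b) a) := by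
      funext x
      show taylorWithinEval w n (Icc a b) a x = _
      rw [taylor_within_apply]
      rw [Fin.sum_univ_eq_sum_range
        (fun k => (x - a) ^ k • (((k ! : ℝ))⁻¹ • iteratedDerivWithin k w (Icc a b) a))]
      refine Finset.sum_congr rfl fun k _ => ?_
      rw [smul_smul, mul_comm]
    rw [hpe]
    exact h
  have hpcont : Continuous p := hppoly.continuous
  -- the polynomial representing Q w
  obtain ⟨pf, hpfpoly, hpfeq⟩ := hQrange w hwcont
  have hpfcont : Continuous pf := hpfpoly.continuous
  set B := (b - a) ^ n / n ! * K with hBdef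
  have hB0 : 0 ≤ B := mul_nonneg (div_nonneg (pow_nonneg hba _) (by positivity)) hK0
  -- decomposition of Q w
  have hwmp : ContinuousOn (w - p) (Icc a b) := hwcont.sub hpcont.continuousOn
  have hE1eq : ∀ u ∈ Icc a b, w u - Q w u = (w - p) u - Q (w - p) u := by
    intro u hu
    have h1 : Q w u = Q ((w - p) + p) u := by rw [sub_add_cancel]
    rw [h1, hQadd _ _ hwmp hpcont.continuousOn u hu, hQpoly p hppoly u hu]
    simp only [Pi.sub_apply, Pi.add_apply]
    abel
  -- measurability
  have hwmpmeas : AEStronglyMeasurable (w - p) μ :=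
    (hwmp.mono Ioo_subset_Icc_self).aestronglyMeasurable measurableSet_Ioo
  have hQwmpmeas : AEStronglyMeasurable (Q (w - p)) μ := by
    obtain ⟨pg, hpgpoly, hpgeq⟩ := hQrange (w - p) hwmp
    refine (hpgpoly.continuous.aestronglyMeasurable (μ := μ)).congr ?_
    filter_upwards [ae_restrict_mem measurableSet_Ioo] with u hu
    exact (hpgeq u (Ioo_subset_Icc_self hu)).symm
  -- L^∞ bounds
  have hwmpbound : eLpNorm (w - p) ⊤ μ ≤ ENNReal.ofReal B := by
    rw [eLpNorm_exponent_top]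
    refine eLpNormEssSup_le_of_ae_bound (C := B) ?_
    filter_upwards [ae_restrict_mem measurableSet_Ioo] with u hu
    exact hrem u (Ioo_subset_Icc_self hu)
  have hE1bound : eLpNorm (fun u => w u - Q w u) ⊤ μ ≤ ENNReal.ofReal ((1 + C_Q) * B) := by
    have hcongr : (fun u => w u - Q w u) =ᵐ[μ] ((w - p) - Q (w - p)) := by
      filter_upwards [ae_restrict_mem measurableSet_Ioo] with u hu
      exact hE1eq u (Ioo_subset_Icc_self hu)
    rw [eLpNorm_congr_ae hcongr]
    calc eLpNorm ((w - p) - Q (w - p)) ⊤ μ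
        ≤ eLpNorm (w - p) ⊤ μ + eLpNorm (Q (w - p)) ⊤ μ :=
          eLpNorm_sub_le hwmpmeas hQwmpmeas le_top
      _ ≤ ENNReal.ofReal B + ENNReal.ofReal C_Q * ENNReal.ofReal B :=
          add_le_add hwmpbound ((hQbound (w - p) hwmp).trans (by gcongr))
      _ = ENNReal.ofReal ((1 + C_Q) * B) := by
          rw [← ENNReal.ofReal_mul hCQ.le, ← ENNReal.ofReal_add hB0 (by positivity)]
          congr 1
          ring
  -- K as an L¹ norm
  have hKe : ENNReal.ofReal K = eLpNorm Ds 1 μ := by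
    have hint : Integrable Ds μ := by
      rw [hμdef]
      exact (hDscont.integrableOn_Icc).mono_set Ioo_subset_Icc_self
    rw [eLpNorm_one_eq_lintegral_enorm, ← ofReal_integral_norm_eq_lintegral_enorm hint]
    congr 1
    rw [hKdef, intervalIntegral.integral_of_le hab.le, integral_Ioc_eq_integral_Ioo]
  -- E1 measurability
  have hE1meas : AEStronglyMeasurable (fun u => w u - Q w u) μ := by
    refine AEStronglyMeasurable.congr
      (((hwcont.sub hpfcont.continuousOn).mono Ioo_subset_Icc_self).aestronglyMeasurable
        measurableSet_Ioo) ?_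
    filter_upwards [ae_restrict_mem measurableSet_Ioo] with u hu
    rw [hpfeq u (Ioo_subset_Icc_self hu)]
    rfl
  -- derivative of the projection
  have hderivP : ∀ u ∈ Ioo a b, deriv (fun x => v a + ∫ σ in a..x, Q w σ) u = pf u := by
    intro u hu
    have hev : (fun x => v a + ∫ σ in a..x, Q w σ) =ᶠ[nhds u]
        (fun x => v a + ∫ σ in a..x, pf σ) := by
      filter_upwards [isOpen_Ioo.mem_nhds hu] with x hx
      congr 1
      refine intervalIntegral.integral_congr fun t ht => ?_
      rw [uIcc_of_le hx.1.le] at ht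
      exact hpfeq t ⟨ht.1, le_trans ht.2 hx.2.le⟩
    rw [hev.deriv_eq]
    have h2 : HasDerivAt (fun x => v a + ∫ σ in a..x, pf σ) (pf u) u := by
      refine HasDerivAt.const_add _ ?_
      exact intervalIntegral.integral_hasDerivAt_right
        (hpfcont.intervalIntegrable _ _)
        (hpfcont.stronglyMeasurableAtFilter _ _) hpfcont.continuousAt
    exact h2.deriv
  have hE2ae : (fun u => w u - deriv (fun x => v a + ∫ σ in a..x, Q w σ) u) =ᵐ[μ]
      (fun u => w u - Q w u) := by
    filter_upwards [ae_restrict_mem measurableSet_Ioo] with u hu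
    rw [hderivP u hu, hpfeq u (Ioo_subset_Icc_self hu)]
  -- second estimate
  have hsecond : eLpNorm (fun u => w u - Q w u) r μ ≤
      ENNReal.ofReal (((1 + C_Q) * ((b - a) ^ n / n !)) * (b - a)) * eLpNorm Ds r μ := by
    refine key_combine hab hr hE1meas hDsmeas
      (mul_nonneg (by positivity) (div_nonneg (pow_nonneg hba _) (by positivity))) ?_
    calc eLpNorm (fun u => w u - Q w u) ⊤ μ ≤ ENNReal.ofReal ((1 + C_Q) * B) := hE1bound
      _ = ENNReal.ofReal ((1 + C_Q) * ((b - a) ^ n / n !)) * ENNReal.ofReal K := by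
          rw [← ENNReal.ofReal_mul (by positivity)]
          congr 1
          rw [hBdef]; ring
      _ = _ := by rw [hKe]
  -- FTC for v
  have hvFTC : ∀ u ∈ Icc a b, v u - v a = ∫ σ in a..u, w σ := by
    intro u hu
    have hd : ∀ t ∈ Ioo a u, HasDerivWithinAt v (w t) (Ioi t) t := by
      intro t ht
      have ht' : t ∈ Ioo a b := ⟨ht.1, lt_of_lt_of_le ht.2 hu.2⟩
      have hdiff : DifferentiableWithinAt ℝ v (Icc a b) t :=
        (hv.differentiableOn (by exact_mod_cast (by omega : n + 2 ≠ 0))) t (Ioo_subset_Icc_self ht')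
      exact (hdiff.hasDerivWithinAt.hasDerivAt
        (Icc_mem_nhds ht'.1 ht'.2)).hasDerivWithinAt
    have hint : IntervalIntegrable w volume a u :=
      (hwcont.mono (by rw [uIcc_of_le hu.1]; exact Icc_subset_Icc_right hu.2)).intervalIntegrable
    exact (intervalIntegral.integral_eq_sub_of_hasDeriv_right_of_le hu.1
      (hv.continuousOn.mono (Icc_subset_Icc_right hu.2)) hd hint).symm
  -- the integral defect identity
  have hE0 : ∀ u ∈ Icc a b, v u - (v a + ∫ σ in a..u, Q w σ) =
      ∫ σ in a..u, (w σ - pf σ) := by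
    intro u hu
    have hQint : (∫ σ in a..u, Q w σ) = ∫ σ in a..u, pf σ := by
      refine intervalIntegral.integral_congr fun t ht => ?_
      rw [uIcc_of_le hu.1] at ht
      exact hpfeq t ⟨ht.1, le_trans ht.2 hu.2⟩
    have hintw : IntervalIntegrable w volume a u :=
      (hwcont.mono (by rw [uIcc_of_le hu.1]; exact Icc_subset_Icc_right hu.2)).intervalIntegrable
    rw [hQint, intervalIntegral.integral_sub hintw (hpfcont.intervalIntegrable _ _), ← hvFTC u hu]
    abel
  -- L¹ bound for the L∞ error on (a,b)
  have hL1E1 : (∫ σ in a..b, ‖w σ - pf σ‖) ≤ (b - a) * ((1 + C_Q) * B) := by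
    have hmeasE1' : AEStronglyMeasurable (fun σ => w σ - pf σ) μ :=
      ((hwcont.sub hpfcont.continuousOn).mono Ioo_subset_Icc_self).aestronglyMeasurable
        measurableSet_Ioo
    have hintE1' : Integrable (fun σ => w σ - pf σ) μ := by
      rw [hμdef]
      exact ((hwcont.sub hpfcont.continuousOn).integrableOn_Icc).mono_set Ioo_subset_Icc_self
    have h1 : ENNReal.ofReal (∫ σ in a..b, ‖w σ - pf σ‖) =
        eLpNorm (fun σ => w σ - pf σ) 1 μ := by
      rw [eLpNorm_one_eq_lintegral_enorm, ← ofReal_integral_norm_eq_lintegral_enorm hintE1']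
      congr 1
      rw [intervalIntegral.integral_of_le hab.le, integral_Ioc_eq_integral_Ioo]
    have h2 : eLpNorm (fun σ => w σ - pf σ) 1 μ ≤
        ENNReal.ofReal (b - a) * ENNReal.ofReal ((1 + C_Q) * B) := by
      have hH := eLpNorm_le_eLpNorm_mul_rpow_measure_univ (p := 1) (q := ⊤)
        le_top hmeasE1' (μ := μ)
      have hμu : μ Set.univ = ENNReal.ofReal (b - a) := by
        rw [hμdef, Measure.restrict_apply_univ, Real.volume_Ioo]
      rw [hμu] at hH
      have hexp : (1 / (1 : ℝ≥0∞).toReal - 1 / (⊤ : ℝ≥0∞).toReal) = 1 := by norm_num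
      rw [hexp, ENNReal.rpow_one] at hH
      refine hH.trans ?_
      rw [mul_comm]
      gcongr
      have hcongr : (fun σ => w σ - pf σ) =ᵐ[μ] (fun u => w u - Q w u) := by
        filter_upwards [ae_restrict_mem measurableSet_Ioo] with u hu
        rw [hpfeq u (Ioo_subset_Icc_self hu)]
      rw [eLpNorm_congr_ae hcongr]
      exact hE1bound
    have := h1 ▸ h2
    have h3 : ENNReal.ofReal (∫ σ in a..b, ‖w σ - pf σ‖) ≤
        ENNReal.ofReal ((b - a) * ((1 + C_Q) * B)) := by
      rw [ENNReal.ofReal_mul hba]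
      exact h1 ▸ h2
    exact (ENNReal.ofReal_le_ofReal_iff (by positivity)).mp h3
  -- pointwise bound for the zeroth-order error
  have hE0bound : ∀ u ∈ Icc a b, ‖v u - (v a + ∫ σ in a..u, Q w σ)‖ ≤
      (b - a) * ((1 + C_Q) * B) := by
    intro u hu
    rw [hE0 u hu]
    calc ‖∫ σ in a..u, (w σ - pf σ)‖ ≤ ∫ σ in a..u, ‖w σ - pf σ‖ :=
          intervalIntegral.norm_integral_le_integral_norm hu.1
      _ ≤ ∫ σ in a..b, ‖w σ - pf σ‖ := by
          apply intervalIntegral.integral_mono_interval (le_refl a) hu.1 hu.2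
          · filter_upwards with t; exact norm_nonneg _
          · exact ContinuousOn.intervalIntegrable
              (by rw [uIcc_of_le hab.le]; exact (hwcont.sub hpfcont.continuousOn).norm)
      _ ≤ (b - a) * ((1 + C_Q) * B) := hL1E1
  -- measurability for the zeroth-order error
  have hE0meas : AEStronglyMeasurable (fun u => v u - (v a + ∫ σ in a..u, Q w σ)) μ := by
    have hcontI : Continuous (fun u : ℝ => ∫ σ in a..u, pf σ) :=
      intervalIntegral.continuous_primitive (fun _ _ => hpfcont.intervalIntegrable _ _) a
    have hcont2 : ContinuousOn (fun x => v x - (v a + ∫ σ in a..x, pf σ)) (Ioo a b) :=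
      (hv.continuousOn.mono Ioo_subset_Icc_self).sub
        ((continuous_const.add hcontI).continuousOn)
    refine (hcont2.aestronglyMeasurable measurableSet_Ioo).congr ?_
    filter_upwards [ae_restrict_mem measurableSet_Ioo] with u hu
    have hQint : (∫ σ in a..u, pf σ) = ∫ σ in a..u, Q w σ := by
      refine (intervalIntegral.integral_congr fun t ht => ?_).symm
      rw [uIcc_of_le hu.1.le] at ht
      exact hpfeq t ⟨ht.1, le_trans ht.2 hu.2.le⟩
    rw [hQint]
  -- first estimate
  have hE0top : eLpNorm (fun u => v u - (v a + ∫ σ in a..u, Q w σ)) ⊤ μ ≤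
      ENNReal.ofReal ((b - a) * ((1 + C_Q) * B)) := by
    rw [eLpNorm_exponent_top]
    refine eLpNormEssSup_le_of_ae_bound ?_
    filter_upwards [ae_restrict_mem measurableSet_Ioo] with u hu
    exact hE0bound u (Ioo_subset_Icc_self hu)
  have hfirst : eLpNorm (fun u => v u - (v a + ∫ σ in a..u, Q w σ)) r μ ≤
      ENNReal.ofReal (((b - a) * ((1 + C_Q) * ((b - a) ^ n / n !))) * (b - a)) *
        eLpNorm Ds r μ := by
    refine key_combine hab hr hE0meas hDsmeas
      (mul_nonneg hba (mul_nonneg (by positivity)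
        (div_nonneg (pow_nonneg hba _) (by positivity)))) ?_
    calc eLpNorm (fun u => v u - (v a + ∫ σ in a..u, Q w σ)) ⊤ μ
        ≤ ENNReal.ofReal ((b - a) * ((1 + C_Q) * B)) := hE0top
      _ = ENNReal.ofReal ((b - a) * ((1 + C_Q) * ((b - a) ^ n / n !))) * ENNReal.ofReal K := by
          rw [← ENNReal.ofReal_mul (by positivity)]
          congr 1
          rw [hBdef]; ring
      _ = _ := by rw [hKe]
  constructor
  · refine hfirst.trans (le_of_eq ?_)
    congr 2
    rw [show (n + 2 : ℕ) = n + 2 from rfl]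
    field_simp
    ring
  · refine (le_of_eq (eLpNorm_congr_ae hE2ae)).trans (hsecond.trans (le_of_eq ?_))
    congr 2
    rw [show (n + 2 - 1 : ℕ) = n + 1 from rfl]
    field_simp
    ring
end
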